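/- arXiv:2309.08749 — 6 statements merged into one kernel-verified Lean document; each statement's English description precedes it below -/
import Mathlib

section
/- Let n ≥ 1. For every smooth function f : ℝ^n × ℝ^n × ℝ^n → ℂ, the symplectic Dirac operator D_s commutes with each of the following operators realising the Lie algebra sp(2n): X_{jk} f = x_j ∂f/∂x_k − y_k ∂f/∂y_j − (q_k ∂f/∂q_j + (1/2)δ_{jk} f) for 1 ≤ j ≤ k ≤ n; Y_{jk} f = x_j ∂f/∂y_k + x_k ∂f/∂y_j + i ∂²f/∂q_j∂q_k for 1 ≤ j < k ≤ n, and Y_{jj} f = x_j ∂f/∂y_j + (i/2) ∂²f/∂q_j² for 1 ≤ j ≤ n; Z_{jk} f = y_j ∂f/∂x_k + y_k ∂f/∂x_j + i q_j q_k f for 1 ≤ j < k ≤ n, and Z_{jj} f = y_j ∂f/∂x_j + (i/2) q_j² f for 1 ≤ j ≤ n. That is, D_s(G f) = G(D_s f) for each such generator G. -/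
open Complex Finset Matrix

noncomputable section

/-- A point of `ℝ^n × ℝ^n × ℝ^n`, with coordinates `(x, y, q)`. -/
abbrev Vec (n : ℕ) := (Fin n → ℝ) × (Fin n → ℝ) × (Fin n → ℝ)

/-- Partial derivative in the variable `x_j`. -/
noncomputable def pdx (n : ℕ) (j : Fin n) (f : Vec n → ℂ) : Vec n → ℂ :=
  fun p => deriv (fun t => f (Function.update p.1 j t, p.2.1, p.2.2)) (p.1 j)

/-- Partial derivative in the variable `y_j`. -/
noncomputable def pdy (n : ℕ) (j : Fin n) (f : Vec n → ℂ) : Vec n → ℂ :=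
  fun p => deriv (fun t => f (p.1, Function.update p.2.1 j t, p.2.2)) (p.2.1 j)

/-- Partial derivative in the variable `q_j`. -/
noncomputable def pdq (n : ℕ) (j : Fin n) (f : Vec n → ℂ) : Vec n → ℂ :=
  fun p => deriv (fun t => f (p.1, p.2.1, Function.update p.2.2 j t)) (p.2.2 j)

/-- The symplectic Dirac operator `D_s f = Σ_j (i q_j ∂f/∂y_j − ∂²f/∂q_j∂x_j)`. -/
noncomputable def Ds (n : ℕ) (f : Vec n → ℂ) : Vec n → ℂ :=
  fun p => ∑ j : Fin n, (Complex.I * (p.2.2 j : ℂ) * pdy n j f p - pdq n j (pdx n j f) p)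

/-- The twisted symplectic Dirac operator `D_t f = Σ_j (i q_j ∂f/∂x_j + ∂²f/∂y_j∂q_j)`. -/
noncomputable def Dt (n : ℕ) (f : Vec n → ℂ) : Vec n → ℂ :=
  fun p => ∑ j : Fin n, (Complex.I * (p.2.2 j : ℂ) * pdx n j f p + pdy n j (pdq n j f) p)

/-- The Fischer dual `X_s f = Σ_j (y_j ∂f/∂q_j + i q_j x_j f)`. -/
noncomputable def Xs (n : ℕ) (f : Vec n → ℂ) : Vec n → ℂ :=
  fun p => ∑ j : Fin n, ((p.2.1 j : ℂ) * pdq n j f p + Complex.I * (p.2.2 j : ℂ) * (p.1 j : ℂ) * f p)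

/-- The Fischer dual `X_t f = Σ_j (x_j ∂f/∂q_j − i y_j q_j f)`. -/
noncomputable def Xt (n : ℕ) (f : Vec n → ℂ) : Vec n → ℂ :=
  fun p => ∑ j : Fin n, ((p.1 j : ℂ) * pdq n j f p - Complex.I * (p.2.1 j : ℂ) * (p.2.2 j : ℂ) * f p)

/-- The Euler operator `𝔼 f = Σ_j (x_j ∂f/∂x_j + y_j ∂f/∂y_j)`. -/
noncomputable def EulerOp (n : ℕ) (f : Vec n → ℂ) : Vec n → ℂ :=
  fun p => ∑ j : Fin n, ((p.1 j : ℂ) * pdx n j f p + (p.2.1 j : ℂ) * pdy n j f p)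

/-- The Laplacian in the `(x,y)` variables. -/
noncomputable def Lap (n : ℕ) (f : Vec n → ℂ) : Vec n → ℂ :=
  fun p => ∑ j : Fin n, (pdx n j (pdx n j f) p + pdy n j (pdy n j f) p)
/-- `X_{jk} f = x_j ∂f/∂x_k − y_k ∂f/∂y_j − (q_k ∂f/∂q_j + (1/2)δ_{jk} f)`. -/
noncomputable def Xgen (n : ℕ) (j k : Fin n) (g : Vec n → ℂ) : Vec n → ℂ :=
  fun p => (p.1 j : ℂ) * pdx n k g p - (p.2.1 k : ℂ) * pdy n j g p -
    ((p.2.2 k : ℂ) * pdq n j g p + (if j = k then (1 : ℂ) / 2 else 0) * g p)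

/-- `Y_{jk} f = x_j ∂f/∂y_k + x_k ∂f/∂y_j + i ∂²f/∂q_j∂q_k` (for `j < k`). -/
noncomputable def Ygen (n : ℕ) (j k : Fin n) (g : Vec n → ℂ) : Vec n → ℂ :=
  fun p => (p.1 j : ℂ) * pdy n k g p + (p.1 k : ℂ) * pdy n j g p +
    Complex.I * pdq n j (pdq n k g) p

/-- `Y_{jj} f = x_j ∂f/∂y_j + (i/2) ∂²f/∂q_j²`. -/
noncomputable def Ydiag (n : ℕ) (j : Fin n) (g : Vec n → ℂ) : Vec n → ℂ :=
  fun p => (p.1 j : ℂ) * pdy n j g p + Complex.I / 2 * pdq n j (pdq n j g) p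

/-- `Z_{jk} f = y_j ∂f/∂x_k + y_k ∂f/∂x_j + i q_j q_k f` (for `j < k`). -/
noncomputable def Zgen (n : ℕ) (j k : Fin n) (g : Vec n → ℂ) : Vec n → ℂ :=
  fun p => (p.2.1 j : ℂ) * pdx n k g p + (p.2.1 k : ℂ) * pdx n j g p +
    Complex.I * (p.2.2 j : ℂ) * (p.2.2 k : ℂ) * g p

/-- `Z_{jj} f = y_j ∂f/∂x_j + (i/2) q_j² f`. -/
noncomputable def Zdiag (n : ℕ) (j : Fin n) (g : Vec n → ℂ) : Vec n → ℂ :=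
  fun p => (p.2.1 j : ℂ) * pdx n j g p + Complex.I / 2 * (p.2.2 j : ℂ) ^ 2 * g p

set_option maxHeartbeats 1000000

namespace SpAux
variable {n : ℕ}

noncomputable def D (v : Vec n) (f : Vec n → ℂ) : Vec n → ℂ := fun p => fderiv ℝ f p v

@[fun_prop] lemma smooth_D (v : Vec n) {f : Vec n → ℂ} (hf : ContDiff ℝ (⊤ : ℕ∞) f) :
    ContDiff ℝ (⊤ : ℕ∞) (D v f) :=
  (hf.fderiv_right (m := (⊤:ℕ∞)) (by exact_mod_cast le_top)).clm_apply contDiff_const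

@[fun_prop] lemma diff_of_smooth {f : Vec n → ℂ} (hf : ContDiff ℝ (⊤:ℕ∞) f) :
    Differentiable ℝ f := hf.differentiable (by simp)

@[fun_prop] lemma diff_D (v : Vec n) {f : Vec n → ℂ} (hf : ContDiff ℝ (⊤ : ℕ∞) f) :
    Differentiable ℝ (D v f) := diff_of_smooth (smooth_D v hf)

@[fun_prop] lemma diff_ofReal : Differentiable ℝ (Complex.ofReal) :=
  Complex.ofRealCLM.differentiable
@[fun_prop] lemma contDiff_ofReal' : ContDiff ℝ (⊤:ℕ∞) (Complex.ofReal) :=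
  Complex.ofRealCLM.contDiff

def ex (j : Fin n) : Vec n := (Pi.single j 1, 0, 0)
def ey (j : Fin n) : Vec n := (0, Pi.single j 1, 0)
def eQ (j : Fin n) : Vec n := (0, 0, Pi.single j 1)

lemma D_comm {f : Vec n → ℂ} (hf : ContDiff ℝ (⊤ : ℕ∞) f) (v w : Vec n) :
    D v (D w f) = D w (D v f) := by
  funext p
  have h2 : DifferentiableAt ℝ (fderiv ℝ f) p :=
    ((hf.fderiv_right (m := (⊤:ℕ∞)) (by exact_mod_cast le_top)).differentiable
      (by simp)).differentiableAt
  have e : ∀ u : Vec n, fderiv ℝ (fun q => fderiv ℝ f q u) p =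
      (fderiv ℝ (fderiv ℝ f) p).flip u := by
    intro u
    have h : (fun q => fderiv ℝ f q u) = fun q => (fderiv ℝ f q) u := rfl
    rw [h, fderiv_clm_apply h2 (differentiableAt_const u)]
    simp [fderiv_const]
  have sym : IsSymmSndFDerivAt ℝ f p :=
    hf.contDiffAt.isSymmSndFDerivAt (n := (⊤:ℕ∞)) (by simp [minSmoothness_of_isRCLikeNormedField]; exact WithTop.coe_le_coe.mpr le_top)
  show fderiv ℝ (fun q => fderiv ℝ f q w) p v = fderiv ℝ (fun q => fderiv ℝ f q v) p w
  rw [e w, e v]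
  simpa using sym v w

/-- swap outer two of three -/
lemma D_comm3 {f : Vec n → ℂ} (hf : ContDiff ℝ (⊤ : ℕ∞) f) (u v w : Vec n) :
    D u (D v (D w f)) = D v (D u (D w f)) := D_comm (smooth_D w hf) u v

/-- rotate: D u (D v (D w f)) = D w (D u (D v f)) -/
lemma D_rot {f : Vec n → ℂ} (hf : ContDiff ℝ (⊤ : ℕ∞) f) (u v w : Vec n) :
    D u (D v (D w f)) = D w (D u (D v f)) := by
  rw [congrArg (D u) (D_comm hf v w), D_comm3 hf u w v]

/- ### conversion of pd to D -/

lemma pdx_eq {f : Vec n → ℂ} (hf : Differentiable ℝ f) (j : Fin n) :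
    pdx n j f = D (ex j) f := by
  funext p
  have hc : ∀ t : ℝ, ((Function.update p.1 j t, p.2.1, p.2.2) : Vec n)
      = p + (t - p.1 j) • ex j := by
    intro t
    refine Prod.ext (funext fun i => ?_) (Prod.ext ?_ ?_)
    · by_cases h : i = j
      · subst h; simp [ex]
      · simp [ex, Function.update_of_ne h, Pi.single_apply, h]
    · simp [ex]
    · simp [ex]
  have hd : HasDerivAt (fun t : ℝ => p + (t - p.1 j) • ex j) (ex j) (p.1 j) := by
    have h1 : HasDerivAt (fun t : ℝ => t - p.1 j) 1 (p.1 j) := (hasDerivAt_id _).sub_const _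
    simpa using (h1.smul_const (ex j)).const_add p
  have e0 : p + ((p.1 j : ℝ) - p.1 j) • ex j = p := by simp
  have hcomp : HasDerivAt (fun t => f (p + (t - p.1 j) • ex j))
      (fderiv ℝ f p (ex j)) (p.1 j) := by
    have hl : HasFDerivAt f (fderiv ℝ f p) ((fun t : ℝ => p + (t - p.1 j) • ex j) (p.1 j)) := by
      rw [show (fun t : ℝ => p + (t - p.1 j) • ex j) (p.1 j) = p from e0]
      exact (hf p).hasFDerivAt
    exact hl.comp_hasDerivAt _ hd
  show deriv (fun t => f (Function.update p.1 j t, p.2.1, p.2.2)) (p.1 j) = _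
  simp only [hc]
  exact hcomp.deriv

lemma pdy_eq {f : Vec n → ℂ} (hf : Differentiable ℝ f) (j : Fin n) :
    pdy n j f = D (ey j) f := by
  funext p
  have hc : ∀ t : ℝ, ((p.1, Function.update p.2.1 j t, p.2.2) : Vec n)
      = p + (t - p.2.1 j) • ey j := by
    intro t
    refine Prod.ext ?_ (Prod.ext (funext fun i => ?_) ?_)
    · simp [ey]
    · by_cases h : i = j
      · subst h; simp [ey]
      · simp [ey, Function.update_of_ne h, Pi.single_apply, h]
    · simp [ey]
  have hd : HasDerivAt (fun t : ℝ => p + (t - p.2.1 j) • ey j) (ey j) (p.2.1 j) := by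
    have h1 : HasDerivAt (fun t : ℝ => t - p.2.1 j) 1 (p.2.1 j) := (hasDerivAt_id _).sub_const _
    simpa using (h1.smul_const (ey j)).const_add p
  have e0 : p + ((p.2.1 j : ℝ) - p.2.1 j) • ey j = p := by simp
  have hcomp : HasDerivAt (fun t => f (p + (t - p.2.1 j) • ey j))
      (fderiv ℝ f p (ey j)) (p.2.1 j) := by
    have hl : HasFDerivAt f (fderiv ℝ f p) ((fun t : ℝ => p + (t - p.2.1 j) • ey j) (p.2.1 j)) := by
      rw [show (fun t : ℝ => p + (t - p.2.1 j) • ey j) (p.2.1 j) = p from e0]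
      exact (hf p).hasFDerivAt
    exact hl.comp_hasDerivAt _ hd
  show deriv (fun t => f (p.1, Function.update p.2.1 j t, p.2.2)) (p.2.1 j) = _
  simp only [hc]
  exact hcomp.deriv

lemma pdq_eq {f : Vec n → ℂ} (hf : Differentiable ℝ f) (j : Fin n) :
    pdq n j f = D (eQ j) f := by
  funext p
  have hc : ∀ t : ℝ, ((p.1, p.2.1, Function.update p.2.2 j t) : Vec n)
      = p + (t - p.2.2 j) • eQ j := by
    intro t
    refine Prod.ext ?_ (Prod.ext ?_ (funext fun i => ?_))
    · simp [eQ]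
    · simp [eQ]
    · by_cases h : i = j
      · subst h; simp [eQ]
      · simp [eQ, Function.update_of_ne h, Pi.single_apply, h]
  have hd : HasDerivAt (fun t : ℝ => p + (t - p.2.2 j) • eQ j) (eQ j) (p.2.2 j) := by
    have h1 : HasDerivAt (fun t : ℝ => t - p.2.2 j) 1 (p.2.2 j) := (hasDerivAt_id _).sub_const _
    simpa using (h1.smul_const (eQ j)).const_add p
  have e0 : p + ((p.2.2 j : ℝ) - p.2.2 j) • eQ j = p := by simp
  have hcomp : HasDerivAt (fun t => f (p + (t - p.2.2 j) • eQ j))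
      (fderiv ℝ f p (eQ j)) (p.2.2 j) := by
    have hl : HasFDerivAt f (fderiv ℝ f p) ((fun t : ℝ => p + (t - p.2.2 j) • eQ j) (p.2.2 j)) := by
      rw [show (fun t : ℝ => p + (t - p.2.2 j) • eQ j) (p.2.2 j) = p from e0]
      exact (hf p).hasFDerivAt
    exact hl.comp_hasDerivAt _ hd
  show deriv (fun t => f (p.1, p.2.1, Function.update p.2.2 j t)) (p.2.2 j) = _
  simp only [hc]
  exact hcomp.deriv

/- ### calculus rules for D -/

lemma D_add (v : Vec n) {g h : Vec n → ℂ} (hg : Differentiable ℝ g) (hh : Differentiable ℝ h) :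
    D v (fun p => g p + h p) = fun p => D v g p + D v h p := by
  funext p
  show fderiv ℝ (fun p => g p + h p) p v = _
  rw [fderiv_fun_add (hg p) (hh p)]
  simp [D]

lemma D_sub (v : Vec n) {g h : Vec n → ℂ} (hg : Differentiable ℝ g) (hh : Differentiable ℝ h) :
    D v (fun p => g p - h p) = fun p => D v g p - D v h p := by
  funext p
  show fderiv ℝ (fun p => g p - h p) p v = _
  rw [fderiv_fun_sub (hg p) (hh p)]
  simp [D]

lemma D_const_mul (v : Vec n) (a : ℂ) {g : Vec n → ℂ} (hg : Differentiable ℝ g) :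
    D v (fun p => a * g p) = fun p => a * D v g p := by
  funext p
  show fderiv ℝ (fun p => a * g p) p v = _
  rw [fderiv_const_mul (hg p) a]
  simp [D]

lemma D_clm_mul (c : Vec n →L[ℝ] ℂ) (v : Vec n) {g : Vec n → ℂ} (hg : Differentiable ℝ g) :
    D v (fun p => c p * g p) = fun p => c v * g p + c p * D v g p := by
  funext p
  show fderiv ℝ (fun p => c p * g p) p v = _
  rw [fderiv_fun_mul (c.differentiableAt) (hg p)]
  simp [D, c.fderiv]
  ring

def cxL (j : Fin n) : Vec n →L[ℝ] ℂ :=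
  Complex.ofRealCLM.comp ((ContinuousLinearMap.proj j).comp
    (ContinuousLinearMap.fst ℝ (Fin n → ℝ) ((Fin n → ℝ) × (Fin n → ℝ))))
def cyL (j : Fin n) : Vec n →L[ℝ] ℂ :=
  Complex.ofRealCLM.comp ((ContinuousLinearMap.proj j).comp
    ((ContinuousLinearMap.fst ℝ (Fin n → ℝ) (Fin n → ℝ)).comp
      (ContinuousLinearMap.snd ℝ (Fin n → ℝ) ((Fin n → ℝ) × (Fin n → ℝ)))))
def cqL (j : Fin n) : Vec n →L[ℝ] ℂ :=
  Complex.ofRealCLM.comp ((ContinuousLinearMap.proj j).comp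
    ((ContinuousLinearMap.snd ℝ (Fin n → ℝ) (Fin n → ℝ)).comp
      (ContinuousLinearMap.snd ℝ (Fin n → ℝ) ((Fin n → ℝ) × (Fin n → ℝ)))))

lemma D_cx_mul (v : Vec n) (j : Fin n) {g : Vec n → ℂ} (hg : Differentiable ℝ g) :
    D v (fun p => (p.1 j : ℂ) * g p) = fun p => ((v.1 j : ℝ) : ℂ) * g p + (p.1 j : ℂ) * D v g p :=
  D_clm_mul (cxL j) v hg

lemma D_cy_mul (v : Vec n) (j : Fin n) {g : Vec n → ℂ} (hg : Differentiable ℝ g) :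
    D v (fun p => (p.2.1 j : ℂ) * g p) =
      fun p => ((v.2.1 j : ℝ) : ℂ) * g p + (p.2.1 j : ℂ) * D v g p :=
  D_clm_mul (cyL j) v hg

lemma D_cq_mul (v : Vec n) (j : Fin n) {g : Vec n → ℂ} (hg : Differentiable ℝ g) :
    D v (fun p => (p.2.2 j : ℂ) * g p) =
      fun p => ((v.2.2 j : ℝ) : ℂ) * g p + (p.2.2 j : ℂ) * D v g p :=
  D_clm_mul (cqL j) v hg

lemma D_sum (v : Vec n) {F : Fin n → Vec n → ℂ} (hF : ∀ m, Differentiable ℝ (F m)) :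
    D v (fun p => ∑ m, F m p) = fun p => ∑ m, D v (F m) p := by
  funext p
  show fderiv ℝ (fun p => ∑ m, F m p) p v = _
  rw [fderiv_fun_sum (fun m _ => (hF m p))]
  simp [D]

end SpAux

namespace SpAux
variable {n : ℕ}

@[fun_prop] lemma smooth_fsum {F : Fin n → Vec n → ℂ} (hF : ∀ m, ContDiff ℝ (⊤:ℕ∞) (F m)) :
    ContDiff ℝ (⊤:ℕ∞) (fun p : Vec n => ∑ m, F m p) := by
  apply ContDiff.sum (fun m _ => hF m)

@[fun_prop] lemma diff_fsum {F : Fin n → Vec n → ℂ} (hF : ∀ m, Differentiable ℝ (F m)) :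
    Differentiable ℝ (fun p : Vec n => ∑ m, F m p) := by
  apply Differentiable.fun_sum (fun m _ => hF m)

@[simp] lemma ex_1 (m j : Fin n) : (ex m).1 j = if j = m then (1:ℝ) else 0 := by
  simp [ex, Pi.single_apply]
@[simp] lemma ex_21 (m j : Fin n) : (ex m).2.1 j = 0 := rfl
@[simp] lemma ex_22 (m j : Fin n) : (ex m).2.2 j = 0 := rfl
@[simp] lemma ey_1 (m j : Fin n) : (ey m).1 j = 0 := rfl
@[simp] lemma ey_21 (m j : Fin n) : (ey m).2.1 j = if j = m then (1:ℝ) else 0 := by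
  simp [ey, Pi.single_apply]
@[simp] lemma ey_22 (m j : Fin n) : (ey m).2.2 j = 0 := rfl
@[simp] lemma eQ_1 (m j : Fin n) : (eQ m).1 j = 0 := rfl
@[simp] lemma eQ_21 (m j : Fin n) : (eQ m).2.1 j = 0 := rfl
@[simp] lemma eQ_22 (m j : Fin n) : (eQ m).2.2 j = if j = m then (1:ℝ) else 0 := by
  simp [eQ, Pi.single_apply]

lemma D_rot' {f : Vec n → ℂ} (hf : ContDiff ℝ (⊤ : ℕ∞) f) (u v w : Vec n) :
    D u (D v (D w f)) = D v (D w (D u f)) := (D_rot hf v w u).symm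

noncomputable def dsm (m : Fin n) (f : Vec n → ℂ) : Vec n → ℂ :=
  fun p => Complex.I * ((p.2.2 m : ℂ) * D (ey m) f p) - D (eQ m) (D (ex m) f) p

noncomputable def DsD (f : Vec n → ℂ) : Vec n → ℂ := fun p => ∑ m, dsm m f p

@[fun_prop] lemma smooth_dsm (m : Fin n) {f : Vec n → ℂ} (hf : ContDiff ℝ (⊤:ℕ∞) f) :
    ContDiff ℝ (⊤:ℕ∞) (dsm m f) := by unfold dsm; fun_prop

@[fun_prop] lemma smooth_DsD {f : Vec n → ℂ} (hf : ContDiff ℝ (⊤:ℕ∞) f) :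
    ContDiff ℝ (⊤:ℕ∞) (DsD f) := by unfold DsD dsm; fun_prop

noncomputable def ZdD (j : Fin n) (f : Vec n → ℂ) : Vec n → ℂ :=
  fun p => (p.2.1 j : ℂ) * D (ex j) f p +
    Complex.I / 2 * ((p.2.2 j : ℂ) * ((p.2.2 j : ℂ) * f p))

@[fun_prop] lemma smooth_ZdD (j : Fin n) {f : Vec n → ℂ} (hf : ContDiff ℝ (⊤:ℕ∞) f) :
    ContDiff ℝ (⊤:ℕ∞) (ZdD j f) := by unfold ZdD; fun_prop

lemma coreZd {f : Vec n → ℂ} (hf : ContDiff ℝ (⊤:ℕ∞) f) (j : Fin n) :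
    DsD (ZdD j f) = ZdD j (DsD f) := by
  funext p
  unfold DsD ZdD dsm
  simp (disch := fun_prop) only [D_sum, D_add, D_sub, D_const_mul, D_cx_mul, D_cy_mul, D_cq_mul]
  simp only [ex_1, ex_21, ex_22, ey_1, ey_21, ey_22, eQ_1, eQ_21, eQ_22,
    Complex.ofReal_zero, Complex.ofReal_one, zero_mul, one_mul, mul_zero, zero_add, add_zero,
    mul_sub, mul_add, Finset.mul_sum,
    ← Finset.sum_sub_distrib, ← Finset.sum_add_distrib]
  rw [← sub_eq_zero, ← Finset.sum_sub_distrib]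
  refine Finset.sum_eq_zero fun m _ => ?_
  rw [D_comm hf (ex j) (ey m), D_rot' hf (ex j) (eQ m) (ex m)]
  by_cases h : j = m
  · subst h; simp; first | ring1 | (ring_nf; try simp only [Complex.I_sq]; try ring1)
  · simp [h]; first | ring1 | (ring_nf; try simp only [Complex.I_sq]; try ring1)

end SpAux

namespace SpAux
variable {n : ℕ}

noncomputable def XD (j k : Fin n) (g : Vec n → ℂ) : Vec n → ℂ :=
  fun p => (p.1 j : ℂ) * D (ex k) g p - (p.2.1 k : ℂ) * D (ey j) g p -
    ((p.2.2 k : ℂ) * D (eQ j) g p + (if j = k then (1:ℂ)/2 else 0) * g p)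

@[fun_prop] lemma smooth_XD (j k : Fin n) {f : Vec n → ℂ} (hf : ContDiff ℝ (⊤:ℕ∞) f) :
    ContDiff ℝ (⊤:ℕ∞) (XD j k f) := by unfold XD; fun_prop

lemma coreX {f : Vec n → ℂ} (hf : ContDiff ℝ (⊤:ℕ∞) f) (j k : Fin n) :
    DsD (XD j k f) = XD j k (DsD f) := by
  funext p
  unfold DsD XD dsm
  simp (disch := fun_prop) only [D_sum, D_add, D_sub, D_const_mul, D_cx_mul, D_cy_mul, D_cq_mul]
  simp only [ex_1, ex_21, ex_22, ey_1, ey_21, ey_22, eQ_1, eQ_21, eQ_22,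
    Complex.ofReal_zero, Complex.ofReal_one, zero_mul, one_mul, mul_zero, zero_add, add_zero,
    mul_sub, mul_add, Finset.mul_sum,
    ← Finset.sum_sub_distrib, ← Finset.sum_add_distrib]
  rw [← sub_eq_zero, ← Finset.sum_sub_distrib]
  refine Eq.trans (b := ∑ m : Fin n,
      ((if j = m then (1:ℂ) else 0) *
          (Complex.I * ((p.2.2 k : ℂ) * D (ey j) f p) - D (eQ j) (D (ex k) f) p) +
        (if k = m then (1:ℂ) else 0) *
          (D (ex k) (D (eQ j) f) p - Complex.I * ((p.2.2 k : ℂ) * D (ey j) f p))))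
    (Finset.sum_congr rfl fun m _ => ?_) ?_
  · rw [D_comm hf (ex k) (ey m), D_comm hf (ey j) (ey m), D_comm hf (eQ j) (ey m),
      D_rot' hf (ex k) (eQ m) (ex m), D_rot' hf (ey j) (eQ m) (ex m),
      D_rot' hf (eQ j) (eQ m) (ex m)]
    by_cases h1 : j = m
    · subst h1
      by_cases h2 : k = j
      · subst h2; simp; first | ring1 | (ring_nf; try simp only [Complex.I_sq]; try ring1)
      · simp [h2, Ne.symm h2]; first | ring1 | (ring_nf; try simp only [Complex.I_sq]; try ring1)
    · by_cases h2 : k = m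
      · subst h2; simp [h1, Ne.symm h1]; first | ring1 | (ring_nf; try simp only [Complex.I_sq]; try ring1)
      · simp [h1, h2, Ne.symm h1, Ne.symm h2]; first | ring1 | (ring_nf; try simp only [Complex.I_sq]; try ring1)
  · simp only [ite_mul, one_mul, zero_mul, Finset.sum_add_distrib, Finset.sum_ite_eq,
      Finset.mem_univ, if_true]
    rw [D_comm hf (ex k) (eQ j)]
    ring

end SpAux

namespace SpAux
variable {n : ℕ}

lemma D_perm4 {f : Vec n → ℂ} (hf : ContDiff ℝ (⊤ : ℕ∞) f) (a b c d : Vec n) :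
    D a (D b (D c (D d f))) = D c (D d (D a (D b f))) := by
  rw [congrArg (D a) (D_rot' hf b c d)]
  exact D_rot' (smooth_D b hf) a c d

noncomputable def ZD (j k : Fin n) (g : Vec n → ℂ) : Vec n → ℂ :=
  fun p => (p.2.1 j : ℂ) * D (ex k) g p + (p.2.1 k : ℂ) * D (ex j) g p +
    Complex.I * ((p.2.2 j : ℂ) * ((p.2.2 k : ℂ) * g p))

@[fun_prop] lemma smooth_ZD (j k : Fin n) {f : Vec n → ℂ} (hf : ContDiff ℝ (⊤:ℕ∞) f) :
    ContDiff ℝ (⊤:ℕ∞) (ZD j k f) := by unfold ZD; fun_prop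

lemma coreZ {f : Vec n → ℂ} (hf : ContDiff ℝ (⊤:ℕ∞) f) (j k : Fin n) :
    DsD (ZD j k f) = ZD j k (DsD f) := by
  funext p
  unfold DsD ZD dsm
  simp (disch := fun_prop) only [D_sum, D_add, D_sub, D_const_mul, D_cx_mul, D_cy_mul, D_cq_mul]
  simp only [ex_1, ex_21, ex_22, ey_1, ey_21, ey_22, eQ_1, eQ_21, eQ_22,
    Complex.ofReal_zero, Complex.ofReal_one, zero_mul, one_mul, mul_zero, zero_add, add_zero,
    mul_sub, mul_add, Finset.mul_sum,
    ← Finset.sum_sub_distrib, ← Finset.sum_add_distrib]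
  rw [← sub_eq_zero, ← Finset.sum_sub_distrib]
  refine Eq.trans (b := ∑ m : Fin n,
      ((if j = m then (1:ℂ) else 0) *
          (Complex.I * ((p.2.2 j : ℂ) * D (ex k) f p) - Complex.I * ((p.2.2 k : ℂ) * D (ex j) f p)) +
        (if k = m then (1:ℂ) else 0) *
          (Complex.I * ((p.2.2 k : ℂ) * D (ex j) f p) - Complex.I * ((p.2.2 j : ℂ) * D (ex k) f p))))
    (Finset.sum_congr rfl fun m _ => ?_) ?_
  · rw [D_comm hf (ex k) (ey m), D_comm hf (ex j) (ey m),
      D_rot' hf (ex k) (eQ m) (ex m), D_rot' hf (ex j) (eQ m) (ex m)]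
    by_cases h1 : j = m
    · subst h1
      by_cases h2 : k = j
      · subst h2; simp; first | ring1 | (ring_nf; try simp only [Complex.I_sq]; try ring1)
      · simp [h2, Ne.symm h2]; first | ring1 | (ring_nf; try simp only [Complex.I_sq]; try ring1)
    · by_cases h2 : k = m
      · subst h2; simp [h1, Ne.symm h1]; first | ring1 | (ring_nf; try simp only [Complex.I_sq]; try ring1)
      · simp [h1, h2, Ne.symm h1, Ne.symm h2]; first | ring1 | (ring_nf; try simp only [Complex.I_sq]; try ring1)
  · simp only [ite_mul, one_mul, zero_mul, Finset.sum_add_distrib, Finset.sum_ite_eq,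
      Finset.mem_univ, if_true]
    ring

end SpAux

namespace SpAux
variable {n : ℕ}

noncomputable def YD (j k : Fin n) (g : Vec n → ℂ) : Vec n → ℂ :=
  fun p => (p.1 j : ℂ) * D (ey k) g p + (p.1 k : ℂ) * D (ey j) g p +
    Complex.I * D (eQ j) (D (eQ k) g) p

@[fun_prop] lemma smooth_YD (j k : Fin n) {f : Vec n → ℂ} (hf : ContDiff ℝ (⊤:ℕ∞) f) :
    ContDiff ℝ (⊤:ℕ∞) (YD j k f) := by unfold YD; fun_prop

noncomputable def YdD (j : Fin n) (g : Vec n → ℂ) : Vec n → ℂ :=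
  fun p => (p.1 j : ℂ) * D (ey j) g p + Complex.I / 2 * D (eQ j) (D (eQ j) g) p

@[fun_prop] lemma smooth_YdD (j : Fin n) {f : Vec n → ℂ} (hf : ContDiff ℝ (⊤:ℕ∞) f) :
    ContDiff ℝ (⊤:ℕ∞) (YdD j f) := by unfold YdD; fun_prop

lemma coreY {f : Vec n → ℂ} (hf : ContDiff ℝ (⊤:ℕ∞) f) (j k : Fin n) :
    DsD (YD j k f) = YD j k (DsD f) := by
  funext p
  unfold DsD YD dsm
  simp (disch := fun_prop) only [D_sum, D_add, D_sub, D_const_mul, D_cx_mul, D_cy_mul, D_cq_mul]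
  simp only [ex_1, ex_21, ex_22, ey_1, ey_21, ey_22, eQ_1, eQ_21, eQ_22,
    Complex.ofReal_zero, Complex.ofReal_one, zero_mul, one_mul, mul_zero, zero_add, add_zero,
    mul_sub, mul_add, Finset.mul_sum,
    ← Finset.sum_sub_distrib, ← Finset.sum_add_distrib]
  rw [← sub_eq_zero, ← Finset.sum_sub_distrib]
  refine Eq.trans (b := ∑ m : Fin n,
      ((if j = m then (1:ℂ) else 0) *
          (D (ey j) (D (eQ k) f) p - D (eQ j) (D (ey k) f) p) +
        (if k = m then (1:ℂ) else 0) *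
          (D (eQ j) (D (ey k) f) p - D (eQ k) (D (ey j) f) p)))
    (Finset.sum_congr rfl fun m _ => ?_) ?_
  · rw [D_comm hf (ey k) (ey m), D_comm hf (ey j) (ey m),
      D_rot' hf (ey k) (eQ m) (ex m), D_rot' hf (ey j) (eQ m) (ex m),
      D_comm hf (eQ k) (ey m), D_comm3 hf (eQ j) (ey m) (eQ k),
      D_perm4 hf (eQ j) (eQ k) (eQ m) (ex m)]
    by_cases h1 : j = m
    · subst h1
      by_cases h2 : k = j
      · subst h2; simp; first | ring1 | (ring_nf; try simp only [Complex.I_sq]; try ring1)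
      · simp [h2, Ne.symm h2]; first | ring1 | (ring_nf; try simp only [Complex.I_sq]; try ring1)
    · by_cases h2 : k = m
      · subst h2; simp [h1, Ne.symm h1]; first | ring1 | (ring_nf; try simp only [Complex.I_sq]; try ring1)
      · simp [h1, h2, Ne.symm h1, Ne.symm h2]; first | ring1 | (ring_nf; try simp only [Complex.I_sq]; try ring1)
  · simp only [ite_mul, one_mul, zero_mul, Finset.sum_add_distrib, Finset.sum_ite_eq,
      Finset.mem_univ, if_true]
    rw [D_comm hf (eQ k) (ey j)]
    first | ring1 | (ring_nf; try simp only [Complex.I_sq]; try ring1)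

lemma coreYd {f : Vec n → ℂ} (hf : ContDiff ℝ (⊤:ℕ∞) f) (j : Fin n) :
    DsD (YdD j f) = YdD j (DsD f) := by
  funext p
  unfold DsD YdD dsm
  simp (disch := fun_prop) only [D_sum, D_add, D_sub, D_const_mul, D_cx_mul, D_cy_mul, D_cq_mul]
  simp only [ex_1, ex_21, ex_22, ey_1, ey_21, ey_22, eQ_1, eQ_21, eQ_22,
    Complex.ofReal_zero, Complex.ofReal_one, zero_mul, one_mul, mul_zero, zero_add, add_zero,
    mul_sub, mul_add, Finset.mul_sum,
    ← Finset.sum_sub_distrib, ← Finset.sum_add_distrib]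
  rw [← sub_eq_zero, ← Finset.sum_sub_distrib]
  refine Finset.sum_eq_zero fun m _ => ?_
  rw [D_comm hf (ey j) (ey m), D_rot' hf (ey j) (eQ m) (ex m),
    D_comm hf (eQ j) (ey m), D_comm3 hf (eQ j) (ey m) (eQ j),
    D_perm4 hf (eQ j) (eQ j) (eQ m) (ex m)]
  by_cases h : j = m
  · subst h; simp; rw [D_comm hf (ey j) (eQ j)]
    first | ring1 | (ring_nf; try simp only [Complex.I_sq]; try ring1)
  · simp [h, Ne.symm h]; first | ring1 | (ring_nf; try simp only [Complex.I_sq]; try ring1)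

end SpAux

namespace SpAux
variable {n : ℕ}

lemma Ds_eq {f : Vec n → ℂ} (hf : ContDiff ℝ (⊤:ℕ∞) f) : Ds n f = DsD f := by
  have hd := diff_of_smooth hf
  funext p
  unfold Ds DsD dsm
  refine Finset.sum_congr rfl fun m _ => ?_
  rw [pdy_eq hd, pdx_eq hd, pdq_eq (diff_D (ex m) hf)]
  ring

lemma Xgen_eq {g : Vec n → ℂ} (hg : ContDiff ℝ (⊤:ℕ∞) g) (j k : Fin n) :
    Xgen n j k g = XD j k g := by
  have hd := diff_of_smooth hg
  funext p
  unfold Xgen XD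
  rw [pdx_eq hd, pdy_eq hd, pdq_eq hd]

lemma Ygen_eq {g : Vec n → ℂ} (hg : ContDiff ℝ (⊤:ℕ∞) g) (j k : Fin n) :
    Ygen n j k g = YD j k g := by
  have hd := diff_of_smooth hg
  funext p
  unfold Ygen YD
  rw [pdy_eq hd k, pdy_eq hd j, pdq_eq hd k, pdq_eq (diff_D (eQ k) hg) j]

lemma Ydiag_eq {g : Vec n → ℂ} (hg : ContDiff ℝ (⊤:ℕ∞) g) (j : Fin n) :
    Ydiag n j g = YdD j g := by
  have hd := diff_of_smooth hg
  funext p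
  unfold Ydiag YdD
  rw [pdy_eq hd, pdq_eq hd j, pdq_eq (diff_D (eQ j) hg) j]

lemma Zgen_eq {g : Vec n → ℂ} (hg : ContDiff ℝ (⊤:ℕ∞) g) (j k : Fin n) :
    Zgen n j k g = ZD j k g := by
  have hd := diff_of_smooth hg
  funext p
  unfold Zgen ZD
  rw [pdx_eq hd k, pdx_eq hd j]
  ring

lemma Zdiag_eq {g : Vec n → ℂ} (hg : ContDiff ℝ (⊤:ℕ∞) g) (j : Fin n) :
    Zdiag n j g = ZdD j g := by
  have hd := diff_of_smooth hg
  funext p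
  unfold Zdiag ZdD
  rw [pdx_eq hd]
  ring

end SpAux

open SpAux in
theorem Ds_invariant_under_sp2n_realisation
    (n : ℕ) (hn : 1 ≤ n) (f : Vec n → ℂ) (hf : ContDiff ℝ (⊤ : ℕ∞) f) :
    (∀ j k : Fin n, j ≤ k → Ds n (Xgen n j k f) = Xgen n j k (Ds n f)) ∧
    (∀ j k : Fin n, j < k → Ds n (Ygen n j k f) = Ygen n j k (Ds n f)) ∧
    (∀ j : Fin n, Ds n (Ydiag n j f) = Ydiag n j (Ds n f)) ∧
    (∀ j k : Fin n, j < k → Ds n (Zgen n j k f) = Zgen n j k (Ds n f)) ∧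
    (∀ j : Fin n, Ds n (Zdiag n j f) = Zdiag n j (Ds n f)) := by
  refine ⟨?_, ?_, ?_, ?_, ?_⟩
  · intro j k _
    rw [Xgen_eq hf j k, Ds_eq (smooth_XD j k hf), coreX hf j k, Ds_eq hf,
      Xgen_eq (smooth_DsD hf) j k]
  · intro j k _
    rw [Ygen_eq hf j k, Ds_eq (smooth_YD j k hf), coreY hf j k, Ds_eq hf,
      Ygen_eq (smooth_DsD hf) j k]
  · intro j
    rw [Ydiag_eq hf j, Ds_eq (smooth_YdD j hf), coreYd hf j, Ds_eq hf,
      Ydiag_eq (smooth_DsD hf) j]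
  · intro j k _
    rw [Zgen_eq hf j k, Ds_eq (smooth_ZD j k hf), coreZ hf j k, Ds_eq hf,
      Zgen_eq (smooth_DsD hf) j k]
  · intro j
    rw [Zdiag_eq hf j, Ds_eq (smooth_ZdD j hf), coreZd hf j, Ds_eq hf,
      Zdiag_eq (smooth_DsD hf) j]
end
end

section
/- Let n ≥ 1. For every smooth function f : ℝ^n × ℝ^n × ℝ^n → ℂ one has the commutator identity D_s(D_t f) − D_t(D_s f) = −i Δ f, where Δ f = Σ_{j=1}^n ( ∂²f/∂x_j² + ∂²f/∂y_j² ) is the Laplacian on ℝ^{2n}. -/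
open Complex Finset Matrix

noncomputable section

namespace CommutatorAux

variable {n : ℕ}

/-- Directional derivative. -/
def Dd (v : Vec n) (f : Vec n → ℂ) : Vec n → ℂ := fun p => fderiv ℝ f p v

def ex (j : Fin n) : Vec n := (Pi.single j 1, 0, 0)
def ey (j : Fin n) : Vec n := (0, Pi.single j 1, 0)
def eQ (j : Fin n) : Vec n := (0, 0, Pi.single j 1)

def qc (k : Fin n) : Vec n → ℂ := fun p => (p.2.2 k : ℂ)

lemma hasDerivAt_affine (p : Vec n) (a : ℝ) (v : Vec n) (t : ℝ) :
    HasDerivAt (fun t : ℝ => p + (t - a) • v) v t := by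
  have h : HasDerivAt (fun t : ℝ => t - a) 1 t := (hasDerivAt_id t).sub_const a
  simpa using (h.smul_const v).const_add p

lemma curve_x (p : Vec n) (j : Fin n) :
    (fun t : ℝ => ((Function.update p.1 j t, p.2.1, p.2.2) : Vec n))
      = fun t => p + (t - p.1 j) • ex j := by
  funext t
  refine Prod.ext ?_ (Prod.ext ?_ ?_)
  · funext k
    simp only [ex, Prod.fst_add, Prod.smul_mk, Pi.add_apply, Pi.smul_apply,
      Function.update_apply, Pi.single_apply, smul_eq_mul]
    by_cases h : k = j <;> simp [h]
  · simp [ex]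
  · simp [ex]

lemma curve_y (p : Vec n) (j : Fin n) :
    (fun t : ℝ => ((p.1, Function.update p.2.1 j t, p.2.2) : Vec n))
      = fun t => p + (t - p.2.1 j) • ey j := by
  funext t
  refine Prod.ext ?_ (Prod.ext ?_ ?_)
  · simp [ey]
  · funext k
    simp only [ey, Prod.snd_add, Prod.fst_add, Prod.smul_mk, Pi.add_apply, Pi.smul_apply,
      Function.update_apply, Pi.single_apply, smul_eq_mul]
    by_cases h : k = j <;> simp [h]
  · simp [ey]

lemma curve_q (p : Vec n) (j : Fin n) :
    (fun t : ℝ => ((p.1, p.2.1, Function.update p.2.2 j t) : Vec n))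
      = fun t => p + (t - p.2.2 j) • eQ j := by
  funext t
  refine Prod.ext ?_ (Prod.ext ?_ ?_)
  · simp [eQ]
  · simp [eQ]
  · funext k
    simp only [eQ, Prod.snd_add, Prod.smul_mk, Pi.add_apply, Pi.smul_apply,
      Function.update_apply, Pi.single_apply, smul_eq_mul]
    by_cases h : k = j <;> simp [h]

lemma pdx_eq (f : Vec n → ℂ) (hf : Differentiable ℝ f) (j : Fin n) :
    pdx n j f = Dd (ex j) f := by
  funext p
  have hc : HasDerivAt (fun t : ℝ => ((Function.update p.1 j t, p.2.1, p.2.2) : Vec n))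
      (ex j) (p.1 j) := by
    rw [curve_x]; exact hasDerivAt_affine p (p.1 j) (ex j) (p.1 j)
  have hval : ((Function.update p.1 j (p.1 j), p.2.1, p.2.2) : Vec n) = p := by
    rw [Function.update_eq_self]
  have h1 : HasFDerivAt f (fderiv ℝ f p)
      ((Function.update p.1 j (p.1 j), p.2.1, p.2.2) : Vec n) := by
    rw [hval]; exact (hf p).hasFDerivAt
  exact (HasFDerivAt.comp_hasDerivAt (x := p.1 j) h1 hc).deriv

lemma pdy_eq (f : Vec n → ℂ) (hf : Differentiable ℝ f) (j : Fin n) :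
    pdy n j f = Dd (ey j) f := by
  funext p
  have hc : HasDerivAt (fun t : ℝ => ((p.1, Function.update p.2.1 j t, p.2.2) : Vec n))
      (ey j) (p.2.1 j) := by
    rw [curve_y]; exact hasDerivAt_affine p (p.2.1 j) (ey j) (p.2.1 j)
  have hval : ((p.1, Function.update p.2.1 j (p.2.1 j), p.2.2) : Vec n) = p := by
    rw [Function.update_eq_self]
  have h1 : HasFDerivAt f (fderiv ℝ f p)
      ((p.1, Function.update p.2.1 j (p.2.1 j), p.2.2) : Vec n) := by
    rw [hval]; exact (hf p).hasFDerivAt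
  exact (HasFDerivAt.comp_hasDerivAt (x := p.2.1 j) h1 hc).deriv

lemma pdq_eq (f : Vec n → ℂ) (hf : Differentiable ℝ f) (j : Fin n) :
    pdq n j f = Dd (eQ j) f := by
  funext p
  have hc : HasDerivAt (fun t : ℝ => ((p.1, p.2.1, Function.update p.2.2 j t) : Vec n))
      (eQ j) (p.2.2 j) := by
    rw [curve_q]; exact hasDerivAt_affine p (p.2.2 j) (eQ j) (p.2.2 j)
  have hval : ((p.1, p.2.1, Function.update p.2.2 j (p.2.2 j)) : Vec n) = p := by
    rw [Function.update_eq_self]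
  have h1 : HasFDerivAt f (fderiv ℝ f p)
      ((p.1, p.2.1, Function.update p.2.2 j (p.2.2 j)) : Vec n) := by
    rw [hval]; exact (hf p).hasFDerivAt
  exact (HasFDerivAt.comp_hasDerivAt (x := p.2.2 j) h1 hc).deriv

lemma contDiff_Dd (v : Vec n) {f : Vec n → ℂ} (hf : ContDiff ℝ (⊤ : ℕ∞) f) :
    ContDiff ℝ (⊤ : ℕ∞) (Dd v f) := by
  have h1 : ContDiff ℝ (⊤ : ℕ∞) (fderiv ℝ f) := hf.fderiv_right (by simp)
  exact (ContinuousLinearMap.apply ℝ ℂ v).contDiff.comp h1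

lemma diff_Dd (v : Vec n) {f : Vec n → ℂ} (hf : ContDiff ℝ (⊤ : ℕ∞) f) :
    Differentiable ℝ (Dd v f) := (contDiff_Dd v hf).differentiable (by simp)

lemma Dd_comm {f : Vec n → ℂ} (hf : ContDiff ℝ (⊤ : ℕ∞) f) (v w : Vec n) :
    Dd v (Dd w f) = Dd w (Dd v f) := by
  have hdf : Differentiable ℝ f := hf.differentiable (by simp)
  have h2 : ContDiff ℝ (⊤ : ℕ∞) (fderiv ℝ f) := hf.fderiv_right (by simp)
  funext p
  have hx : HasFDerivAt (fderiv ℝ f) (fderiv ℝ (fderiv ℝ f) p) p :=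
    (h2.differentiable (by simp) p).hasFDerivAt
  have key : ∀ u z : Vec n, Dd u (Dd z f) p = fderiv ℝ (fderiv ℝ f) p u z := by
    intro u z
    have hcomp := ((ContinuousLinearMap.apply ℝ ℂ z).hasFDerivAt.comp p hx).fderiv
    have e : Dd z f = (ContinuousLinearMap.apply ℝ ℂ z) ∘ (fderiv ℝ f) := rfl
    calc Dd u (Dd z f) p = fderiv ℝ ((ContinuousLinearMap.apply ℝ ℂ z) ∘ (fderiv ℝ f)) p u := by
          rw [Dd, e]
      _ = fderiv ℝ (fderiv ℝ f) p u z := by rw [hcomp]; rfl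
  rw [key v w, key w v]
  exact second_derivative_symmetric (fun y => (hdf y).hasFDerivAt) hx v w

lemma Dd_fun_sum (v : Vec n) (g : Fin n → Vec n → ℂ) (hg : ∀ k, Differentiable ℝ (g k)) :
    Dd v (fun p => ∑ k : Fin n, g k p) = fun p => ∑ k : Fin n, Dd v (g k) p := by
  funext p
  simp only [Dd]
  rw [fderiv_fun_sum (fun i _ => (hg i).differentiableAt)]
  simp

lemma Dd_fun_add (v : Vec n) {g h : Vec n → ℂ} (hg : Differentiable ℝ g)
    (hh : Differentiable ℝ h) :
    Dd v (fun p => g p + h p) = fun p => Dd v g p + Dd v h p := by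
  funext p; simp only [Dd]; rw [fderiv_fun_add (hg p) (hh p)]; rfl

lemma Dd_fun_const_mul (v : Vec n) (c : ℂ) {g : Vec n → ℂ} (hg : Differentiable ℝ g) :
    Dd v (fun p => c * g p) = fun p => c * Dd v g p := by
  funext p; simp only [Dd]
  rw [fderiv_const_mul (hg p) c]
  simp

lemma Dd_fun_mul (v : Vec n) {g h : Vec n → ℂ} (hg : Differentiable ℝ g)
    (hh : Differentiable ℝ h) :
    Dd v (fun p => g p * h p) = fun p => Dd v g p * h p + g p * Dd v h p := by
  funext p; simp only [Dd]
  rw [fderiv_fun_mul (hg p) (hh p)]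
  simp only [ContinuousLinearMap.add_apply, ContinuousLinearMap.smul_apply, smul_eq_mul]
  ring

def qCLM (k : Fin n) : Vec n →L[ℝ] ℂ :=
  Complex.ofRealCLM.comp (((ContinuousLinearMap.proj k).comp
    (ContinuousLinearMap.snd ℝ (Fin n → ℝ) (Fin n → ℝ))).comp
      (ContinuousLinearMap.snd ℝ (Fin n → ℝ) ((Fin n → ℝ) × (Fin n → ℝ))))

lemma qc_eq (k : Fin n) : qc k = ⇑(qCLM k : Vec n →L[ℝ] ℂ) := rfl

lemma contDiff_qc (k : Fin n) : ContDiff ℝ (⊤ : ℕ∞) (qc (n := n) k) := by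
  rw [qc_eq]; exact (qCLM k).contDiff

lemma Dd_qc (v : Vec n) (k : Fin n) : Dd v (qc k) = fun _ => (v.2.2 k : ℂ) := by
  funext p
  simp only [Dd, qc_eq, (qCLM (n := n) k).fderiv]
  rfl


lemma Dd_fun_sub (v : Vec n) {g h : Vec n → ℂ} (hg : Differentiable ℝ g)
    (hh : Differentiable ℝ h) :
    Dd v (fun p => g p - h p) = fun p => Dd v g p - Dd v h p := by
  funext p; simp only [Dd]; rw [fderiv_fun_sub (hg p) (hh p)]; rfl

lemma Dd_summand (v : Vec n) (k : Fin n) {g h : Vec n → ℂ}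
    (hg : ContDiff ℝ (⊤ : ℕ∞) g) (hh : ContDiff ℝ (⊤ : ℕ∞) h) :
    Dd v (fun p => Complex.I * qc k p * g p + h p)
      = fun p => Complex.I * (v.2.2 k : ℂ) * g p +
          (Complex.I * qc k p * Dd v g p + Dd v h p) := by
  have hqc : Differentiable ℝ (qc (n := n) k) := (contDiff_qc k).differentiable (by simp)
  have hg' : Differentiable ℝ g := hg.differentiable (by simp)
  have hh' : Differentiable ℝ h := hh.differentiable (by simp)
  have h1 : Differentiable ℝ (fun p : Vec n => Complex.I * qc k p) := hqc.const_mul _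
  funext p
  have e1 := congrFun (Dd_fun_add v (g := fun p => Complex.I * qc k p * g p) (h1.mul hg') hh') p
  have e2 := congrFun (Dd_fun_mul v h1 hg') p
  have e3 := congrFun (Dd_fun_const_mul v Complex.I hqc) p
  rw [e1, e2, e3]
  simp only [Dd_qc]
  ring

lemma Dd_summand_sub (v : Vec n) (k : Fin n) {g h : Vec n → ℂ}
    (hg : ContDiff ℝ (⊤ : ℕ∞) g) (hh : ContDiff ℝ (⊤ : ℕ∞) h) :
    Dd v (fun p => Complex.I * qc k p * g p - h p)
      = fun p => Complex.I * (v.2.2 k : ℂ) * g p +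
          (Complex.I * qc k p * Dd v g p - Dd v h p) := by
  have hqc : Differentiable ℝ (qc (n := n) k) := (contDiff_qc k).differentiable (by simp)
  have hg' : Differentiable ℝ g := hg.differentiable (by simp)
  have hh' : Differentiable ℝ h := hh.differentiable (by simp)
  have h1 : Differentiable ℝ (fun p : Vec n => Complex.I * qc k p) := hqc.const_mul _
  funext p
  have e1 := congrFun (Dd_fun_sub v (g := fun p => Complex.I * qc k p * g p) (h1.mul hg') hh') p
  have e2 := congrFun (Dd_fun_mul v h1 hg') p
  have e3 := congrFun (Dd_fun_const_mul v Complex.I hqc) p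
  rw [e1, e2, e3]
  simp only [Dd_qc]
  ring

lemma diff_summand {g h : Fin n → Vec n → ℂ}
    (hg : ∀ k, ContDiff ℝ (⊤ : ℕ∞) (g k)) (hh : ∀ k, ContDiff ℝ (⊤ : ℕ∞) (h k)) (k : Fin n) :
    Differentiable ℝ (fun p : Vec n => Complex.I * qc k p * g k p + h k p) :=
  (((((contDiff_qc k).differentiable (by simp)).const_mul _).mul
    ((hg k).differentiable (by simp))).add ((hh k).differentiable (by simp)))

lemma diff_summand_sub {g h : Fin n → Vec n → ℂ}
    (hg : ∀ k, ContDiff ℝ (⊤ : ℕ∞) (g k)) (hh : ∀ k, ContDiff ℝ (⊤ : ℕ∞) (h k)) (k : Fin n) :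
    Differentiable ℝ (fun p : Vec n => Complex.I * qc k p * g k p - h k p) :=
  (((((contDiff_qc k).differentiable (by simp)).const_mul _).mul
    ((hg k).differentiable (by simp))).sub ((hh k).differentiable (by simp)))

lemma single_sum (j : Fin n) (g : Fin n → ℂ) :
    ∑ k : Fin n, Complex.I * (((eQ (n := n) j).2.2 k : ℝ) : ℂ) * g k = Complex.I * g j := by
  have hq : ∀ k : Fin n, ((eQ (n := n) j).2.2 k : ℂ) = if k = j then 1 else 0 := by
    intro k
    simp [eQ, Pi.single_apply, apply_ite Complex.ofReal]
  simp only [hq]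
  simp [mul_ite, ite_mul, Finset.sum_ite_eq']

lemma Dd_shape (v : Vec n) (hv : v.2.2 = 0) (g h : Fin n → Vec n → ℂ)
    (hg : ∀ k, ContDiff ℝ (⊤ : ℕ∞) (g k)) (hh : ∀ k, ContDiff ℝ (⊤ : ℕ∞) (h k)) :
    Dd v (fun p => ∑ k : Fin n, (Complex.I * qc k p * g k p + h k p))
      = fun p => ∑ k : Fin n, (Complex.I * qc k p * Dd v (g k) p + Dd v (h k) p) := by
  funext p
  rw [congrFun (Dd_fun_sum v _ (diff_summand hg hh)) p]
  refine Finset.sum_congr rfl fun k _ => ?_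
  rw [congrFun (Dd_summand v k (hg k) (hh k)) p, hv]
  simp

lemma Dd_shape_sub (v : Vec n) (hv : v.2.2 = 0) (g h : Fin n → Vec n → ℂ)
    (hg : ∀ k, ContDiff ℝ (⊤ : ℕ∞) (g k)) (hh : ∀ k, ContDiff ℝ (⊤ : ℕ∞) (h k)) :
    Dd v (fun p => ∑ k : Fin n, (Complex.I * qc k p * g k p - h k p))
      = fun p => ∑ k : Fin n, (Complex.I * qc k p * Dd v (g k) p - Dd v (h k) p) := by
  funext p
  rw [congrFun (Dd_fun_sum v _ (diff_summand_sub hg hh)) p]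
  refine Finset.sum_congr rfl fun k _ => ?_
  rw [congrFun (Dd_summand_sub v k (hg k) (hh k)) p, hv]
  simp

lemma Dd_shape_q (j : Fin n) (g h : Fin n → Vec n → ℂ)
    (hg : ∀ k, ContDiff ℝ (⊤ : ℕ∞) (g k)) (hh : ∀ k, ContDiff ℝ (⊤ : ℕ∞) (h k)) :
    Dd (eQ j) (fun p => ∑ k : Fin n, (Complex.I * qc k p * g k p + h k p))
      = fun p => Complex.I * g j p +
          ∑ k : Fin n, (Complex.I * qc k p * Dd (eQ j) (g k) p + Dd (eQ j) (h k) p) := by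
  funext p
  rw [congrFun (Dd_fun_sum (eQ j) _ (diff_summand hg hh)) p]
  rw [Finset.sum_congr rfl (fun k _ => congrFun (Dd_summand (eQ j) k (hg k) (hh k)) p)]
  rw [Finset.sum_add_distrib]
  congr 1
  exact single_sum j (fun k => g k p)

lemma Dd_shape_q_sub (j : Fin n) (g h : Fin n → Vec n → ℂ)
    (hg : ∀ k, ContDiff ℝ (⊤ : ℕ∞) (g k)) (hh : ∀ k, ContDiff ℝ (⊤ : ℕ∞) (h k)) :
    Dd (eQ j) (fun p => ∑ k : Fin n, (Complex.I * qc k p * g k p - h k p))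
      = fun p => Complex.I * g j p +
          ∑ k : Fin n, (Complex.I * qc k p * Dd (eQ j) (g k) p - Dd (eQ j) (h k) p) := by
  funext p
  rw [congrFun (Dd_fun_sum (eQ j) _ (diff_summand_sub hg hh)) p]
  rw [Finset.sum_congr rfl (fun k _ => congrFun (Dd_summand_sub (eQ j) k (hg k) (hh k)) p)]
  rw [Finset.sum_add_distrib]
  congr 1
  exact single_sum j (fun k => g k p)

def Gfun (f : Vec n → ℂ) : Vec n → ℂ :=
  fun p => ∑ k : Fin n, (Complex.I * qc k p * Dd (ex k) f p + Dd (ey k) (Dd (eQ k) f) p)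

def Hfun (f : Vec n → ℂ) : Vec n → ℂ :=
  fun p => ∑ k : Fin n, (Complex.I * qc k p * Dd (ey k) f p - Dd (eQ k) (Dd (ex k) f) p)

lemma smooth_G {f : Vec n → ℂ} (hf : ContDiff ℝ (⊤ : ℕ∞) f) :
    ContDiff ℝ (⊤ : ℕ∞) (Gfun f) := by
  unfold Gfun
  exact ContDiff.sum fun k _ =>
    ((contDiff_const.mul (contDiff_qc k)).mul (contDiff_Dd _ hf)).add
      (contDiff_Dd _ (contDiff_Dd _ hf))

lemma smooth_H {f : Vec n → ℂ} (hf : ContDiff ℝ (⊤ : ℕ∞) f) :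
    ContDiff ℝ (⊤ : ℕ∞) (Hfun f) := by
  unfold Hfun
  exact ContDiff.sum fun k _ =>
    ((contDiff_const.mul (contDiff_qc k)).mul (contDiff_Dd _ hf)).sub
      (contDiff_Dd _ (contDiff_Dd _ hf))

lemma Dt_eq_G {f : Vec n → ℂ} (hf : ContDiff ℝ (⊤ : ℕ∞) f) : Dt n f = Gfun f := by
  have hdf : Differentiable ℝ f := hf.differentiable (by simp)
  have h2 : ∀ j j' : Fin n, pdy n j (Dd (eQ j') f) = Dd (ey j) (Dd (eQ j') f) :=
    fun j j' => pdy_eq _ (diff_Dd _ hf) j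
  funext p
  simp only [Dt, pdx_eq f hdf, pdq_eq f hdf, h2]
  rfl

lemma Ds_eq_H {f : Vec n → ℂ} (hf : ContDiff ℝ (⊤ : ℕ∞) f) : Ds n f = Hfun f := by
  have hdf : Differentiable ℝ f := hf.differentiable (by simp)
  have h2 : ∀ j j' : Fin n, pdq n j (Dd (ex j') f) = Dd (eQ j) (Dd (ex j') f) :=
    fun j j' => pdq_eq _ (diff_Dd _ hf) j
  funext p
  simp only [Ds, pdy_eq f hdf, pdx_eq f hdf, h2]
  rfl

lemma Dd_ey_G {f : Vec n → ℂ} (hf : ContDiff ℝ (⊤ : ℕ∞) f) (j : Fin n) :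
    Dd (ey j) (Gfun f) = fun p => ∑ k : Fin n,
      (Complex.I * qc k p * Dd (ey j) (Dd (ex k) f) p +
        Dd (ey j) (Dd (ey k) (Dd (eQ k) f)) p) := by
  unfold Gfun
  exact Dd_shape (ey j) rfl _ _ (fun k => contDiff_Dd _ hf)
    (fun k => contDiff_Dd _ (contDiff_Dd _ hf))

lemma Dd_ex_G {f : Vec n → ℂ} (hf : ContDiff ℝ (⊤ : ℕ∞) f) (j : Fin n) :
    Dd (ex j) (Gfun f) = fun p => ∑ k : Fin n,
      (Complex.I * qc k p * Dd (ex j) (Dd (ex k) f) p +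
        Dd (ex j) (Dd (ey k) (Dd (eQ k) f)) p) := by
  unfold Gfun
  exact Dd_shape (ex j) rfl _ _ (fun k => contDiff_Dd _ hf)
    (fun k => contDiff_Dd _ (contDiff_Dd _ hf))

lemma Dd_eQ_ex_G {f : Vec n → ℂ} (hf : ContDiff ℝ (⊤ : ℕ∞) f) (j j' : Fin n) :
    Dd (eQ j) (Dd (ex j') (Gfun f)) = fun p =>
      Complex.I * Dd (ex j') (Dd (ex j) f) p +
      ∑ k : Fin n, (Complex.I * qc k p * Dd (eQ j) (Dd (ex j') (Dd (ex k) f)) p +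
        Dd (eQ j) (Dd (ex j') (Dd (ey k) (Dd (eQ k) f))) p) := by
  rw [Dd_ex_G hf j']
  exact Dd_shape_q j _ _ (fun k => contDiff_Dd _ (contDiff_Dd _ hf))
    (fun k => contDiff_Dd _ (contDiff_Dd _ (contDiff_Dd _ hf)))

lemma Dd_ex_H {f : Vec n → ℂ} (hf : ContDiff ℝ (⊤ : ℕ∞) f) (j : Fin n) :
    Dd (ex j) (Hfun f) = fun p => ∑ k : Fin n,
      (Complex.I * qc k p * Dd (ex j) (Dd (ey k) f) p -
        Dd (ex j) (Dd (eQ k) (Dd (ex k) f)) p) := by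
  unfold Hfun
  exact Dd_shape_sub (ex j) rfl _ _ (fun k => contDiff_Dd _ hf)
    (fun k => contDiff_Dd _ (contDiff_Dd _ hf))

lemma Dd_eQ_H {f : Vec n → ℂ} (hf : ContDiff ℝ (⊤ : ℕ∞) f) (j : Fin n) :
    Dd (eQ j) (Hfun f) = fun p =>
      Complex.I * Dd (ey j) f p +
      ∑ k : Fin n, (Complex.I * qc k p * Dd (eQ j) (Dd (ey k) f) p -
        Dd (eQ j) (Dd (eQ k) (Dd (ex k) f)) p) := by
  unfold Hfun
  exact Dd_shape_q_sub j _ _ (fun k => contDiff_Dd _ hf)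
    (fun k => contDiff_Dd _ (contDiff_Dd _ hf))

lemma Dd_ey_eQ_H {f : Vec n → ℂ} (hf : ContDiff ℝ (⊤ : ℕ∞) f) (j j' : Fin n) :
    Dd (ey j) (Dd (eQ j') (Hfun f)) = fun p =>
      Complex.I * Dd (ey j) (Dd (ey j') f) p +
      ∑ k : Fin n, (Complex.I * qc k p * Dd (ey j) (Dd (eQ j') (Dd (ey k) f)) p -
        Dd (ey j) (Dd (eQ j') (Dd (eQ k) (Dd (ex k) f))) p) := by
  rw [Dd_eQ_H hf j']
  have hA : Differentiable ℝ (fun p : Vec n => Complex.I * Dd (ey j') f p) :=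
    (diff_Dd _ hf).const_mul _
  have hS : Differentiable ℝ (fun p : Vec n => ∑ k : Fin n,
      (Complex.I * qc k p * Dd (eQ j') (Dd (ey k) f) p -
        Dd (eQ j') (Dd (eQ k) (Dd (ex k) f)) p)) := by
    have := ContDiff.sum (𝕜 := ℝ) (n := (⊤ : ℕ∞)) (s := (Finset.univ : Finset (Fin n)))
      (f := fun k (p : Vec n) => Complex.I * qc k p * Dd (eQ j') (Dd (ey k) f) p -
        Dd (eQ j') (Dd (eQ k) (Dd (ex k) f)) p)
      (fun k _ => ((contDiff_const.mul (contDiff_qc k)).mul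
        (contDiff_Dd _ (contDiff_Dd _ hf))).sub
        (contDiff_Dd _ (contDiff_Dd _ (contDiff_Dd _ hf))))
    exact this.differentiable (by simp)
  calc Dd (ey j) (fun p => Complex.I * Dd (ey j') f p +
        ∑ k : Fin n, (Complex.I * qc k p * Dd (eQ j') (Dd (ey k) f) p -
          Dd (eQ j') (Dd (eQ k) (Dd (ex k) f)) p))
      = fun p => Dd (ey j) (fun p => Complex.I * Dd (ey j') f p) p +
          Dd (ey j) (fun p => ∑ k : Fin n,
            (Complex.I * qc k p * Dd (eQ j') (Dd (ey k) f) p -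
              Dd (eQ j') (Dd (eQ k) (Dd (ex k) f)) p)) p := Dd_fun_add _ hA hS
    _ = _ := by
        funext p
        rw [congrFun (Dd_fun_const_mul (ey j) Complex.I (diff_Dd _ hf)) p,
          congrFun (Dd_shape_sub (ey j) rfl _ _
            (fun k => contDiff_Dd _ (contDiff_Dd _ hf))
            (fun k => contDiff_Dd _ (contDiff_Dd _ (contDiff_Dd _ hf)))) p]

lemma sum_antisymm {ι : Type*} [Fintype ι] (F : ι → ι → ℂ) (h : ∀ j k, F j k = - F k j) :
    ∑ j, ∑ k, F j k = 0 := by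
  have h1 : ∑ j, ∑ k, F j k = - ∑ j, ∑ k, F j k := by
    calc ∑ j, ∑ k, F j k = ∑ j, ∑ k, -F k j :=
          Finset.sum_congr rfl fun j _ => Finset.sum_congr rfl fun k _ => h j k
      _ = -∑ j, ∑ k, F k j := by simp
      _ = -∑ j, ∑ k, F j k := by rw [Finset.sum_comm]
  have h2 : (2 : ℂ) * (∑ j, ∑ k, F j k) = 0 := by
    rw [two_mul]; nth_rewrite 2 [h1]; ring
  exact (mul_eq_zero.mp h2).resolve_left two_ne_zero

lemma algebra_main {ι : Type*} [Fintype ι] (q xx yy : ι → ℂ) (a b c d : ι → ι → ℂ) :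
    (∑ j, (Complex.I * q j * (∑ k, (Complex.I * q k * a j k + c j k)) -
        (Complex.I * xx j + ∑ k, (Complex.I * q k * b j k + d j k)))) -
      (∑ j, (Complex.I * q j * (∑ k, (Complex.I * q k * a k j - b k j)) +
        (Complex.I * yy j + ∑ k, (Complex.I * q k * c k j - d k j)))) =
      -Complex.I * ∑ j, (xx j + yy j) := by
  have h0 : ∑ j, ∑ k, (Complex.I * q j * (Complex.I * q k * a j k + c j k) -
      (Complex.I * q k * b j k + d j k) -
      Complex.I * q j * (Complex.I * q k * a k j - b k j) -
      (Complex.I * q k * c k j - d k j)) = 0 := by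
    apply sum_antisymm; intro j k; ring
  have hj : ∀ j : ι, (Complex.I * q j * (∑ k, (Complex.I * q k * a j k + c j k)) -
        (Complex.I * xx j + ∑ k, (Complex.I * q k * b j k + d j k))) -
      (Complex.I * q j * (∑ k, (Complex.I * q k * a k j - b k j)) +
        (Complex.I * yy j + ∑ k, (Complex.I * q k * c k j - d k j))) =
      (∑ k, (Complex.I * q j * (Complex.I * q k * a j k + c j k) -
        (Complex.I * q k * b j k + d j k) -
        Complex.I * q j * (Complex.I * q k * a k j - b k j) -
        (Complex.I * q k * c k j - d k j))) + (-Complex.I * xx j - Complex.I * yy j) := by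
    intro j
    rw [Finset.mul_sum, Finset.mul_sum]
    simp only [Finset.sum_sub_distrib]
    ring
  rw [← Finset.sum_sub_distrib]
  rw [Finset.sum_congr rfl (fun j _ => hj j)]
  rw [Finset.sum_add_distrib, h0, zero_add, Finset.mul_sum]
  refine Finset.sum_congr rfl fun j _ => by ring

end CommutatorAux

open CommutatorAux in
theorem commutator_Ds_Dt_eq_neg_i_Laplacian
    (n : ℕ) (hn : 1 ≤ n) (f : Vec n → ℂ) (hf : ContDiff ℝ (⊤ : ℕ∞) f) :
    (fun p => Ds n (Dt n f) p - Dt n (Ds n f) p) = (fun p => -Complex.I * Lap n f p) := by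
  have hdf : Differentiable ℝ f := hf.differentiable (by simp)
  have hG : ContDiff ℝ (⊤ : ℕ∞) (Gfun f) := smooth_G hf
  have hH : ContDiff ℝ (⊤ : ℕ∞) (Hfun f) := smooth_H hf
  have hGd : Differentiable ℝ (Gfun f) := hG.differentiable (by simp)
  have hHd : Differentiable ℝ (Hfun f) := hH.differentiable (by simp)
  funext p
  rw [Dt_eq_G hf, Ds_eq_H hf]
  have c1 : ∀ j : Fin n, pdy n j (Gfun f) = Dd (ey j) (Gfun f) := fun j => pdy_eq _ hGd j
  have c2 : ∀ j : Fin n, pdx n j (Gfun f) = Dd (ex j) (Gfun f) := fun j => pdx_eq _ hGd j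
  have c3 : ∀ j j' : Fin n, pdq n j (Dd (ex j') (Gfun f)) = Dd (eQ j) (Dd (ex j') (Gfun f)) :=
    fun j j' => pdq_eq _ (diff_Dd _ hG) j
  have c4 : ∀ j : Fin n, pdx n j (Hfun f) = Dd (ex j) (Hfun f) := fun j => pdx_eq _ hHd j
  have c5 : ∀ j : Fin n, pdq n j (Hfun f) = Dd (eQ j) (Hfun f) := fun j => pdq_eq _ hHd j
  have c6 : ∀ j j' : Fin n, pdy n j (Dd (eQ j') (Hfun f)) = Dd (ey j) (Dd (eQ j') (Hfun f)) :=
    fun j j' => pdy_eq _ (diff_Dd _ hH) j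
  have c8 : ∀ j j' : Fin n, pdx n j (Dd (ex j') f) = Dd (ex j) (Dd (ex j') f) :=
    fun j j' => pdx_eq _ (diff_Dd _ hf) j
  have c9 : ∀ j j' : Fin n, pdy n j (Dd (ey j') f) = Dd (ey j) (Dd (ey j') f) :=
    fun j j' => pdy_eq _ (diff_Dd _ hf) j
  simp only [Ds, Dt, Lap, c1, c2, c3, c4, c5, c6, pdx_eq f hdf, pdy_eq f hdf, c8, c9,
    Dd_ey_G hf, Dd_eQ_ex_G hf, Dd_ex_H hf, Dd_ey_eQ_H hf, qc]
  have hs1 : ∀ j k : Fin n, Dd (ex j) (Dd (ey k) f) = Dd (ey k) (Dd (ex j) f) :=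
    fun j k => Dd_comm hf _ _
  have hs2 : ∀ j k : Fin n, Dd (ex j) (Dd (eQ k) (Dd (ex k) f))
      = Dd (eQ k) (Dd (ex k) (Dd (ex j) f)) := by
    intro j k
    rw [Dd_comm (contDiff_Dd _ hf) (ex j) (eQ k), Dd_comm hf (ex j) (ex k)]
  have hs3 : ∀ j k : Fin n, Dd (ey j) (Dd (eQ j) (Dd (ey k) f))
      = Dd (ey k) (Dd (ey j) (Dd (eQ j) f)) := by
    intro j k
    rw [Dd_comm hf (eQ j) (ey k), Dd_comm (contDiff_Dd _ hf) (ey j) (ey k)]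
  have hs4 : ∀ j k : Fin n, Dd (ey j) (Dd (eQ j) (Dd (eQ k) (Dd (ex k) f)))
      = Dd (eQ k) (Dd (ex k) (Dd (ey j) (Dd (eQ j) f))) := by
    intro j k
    rw [Dd_comm (contDiff_Dd _ hf) (eQ j) (eQ k), Dd_comm hf (eQ j) (ex k),
      Dd_comm (contDiff_Dd _ (contDiff_Dd _ hf)) (ey j) (eQ k),
      Dd_comm (contDiff_Dd _ hf) (ey j) (ex k)]
  simp only [hs1, hs2, hs3, hs4]
  exact algebra_main (fun j => (p.2.2 j : ℂ)) (fun j => Dd (ex j) (Dd (ex j) f) p)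
    (fun j => Dd (ey j) (Dd (ey j) f) p)
    (fun j k => Dd (ey j) (Dd (ex k) f) p)
    (fun j k => Dd (eQ j) (Dd (ex j) (Dd (ex k) f)) p)
    (fun j k => Dd (ey j) (Dd (ey k) (Dd (eQ k) f)) p)
    (fun j k => Dd (eQ j) (Dd (ex j) (Dd (ey k) (Dd (eQ k) f))) p)
end
end

section
/- Let n ≥ 1 and let f : ℝ^n × ℝ^n × ℝ^n → ℂ be smooth. If D_s f = 0 and D_t f = 0 identically, then f is harmonic in the (x,y)-variables: Σ_{j=1}^n ( ∂²f/∂x_j² + ∂²f/∂y_j² ) = 0 identically. -/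
open Complex Finset Matrix

noncomputable section

/-! ### Auxiliary machinery for the proof -/

section Aux

variable {n : ℕ}

/-- Directional derivative. -/
noncomputable def Dd (v : Vec n) (g : Vec n → ℂ) : Vec n → ℂ := fun p => fderiv ℝ g p v

def eX (n : ℕ) (j : Fin n) : Vec n := (Pi.single j 1, 0, 0)
def eY (n : ℕ) (j : Fin n) : Vec n := (0, Pi.single j 1, 0)
def eQ (n : ℕ) (j : Fin n) : Vec n := (0, 0, Pi.single j 1)

@[simp] lemma eX_22 (k : Fin n) : (eX n k).2.2 = 0 := rfl
@[simp] lemma eY_22 (k : Fin n) : (eY n k).2.2 = 0 := rfl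
@[simp] lemma eQ_22 (k : Fin n) : (eQ n k).2.2 = Pi.single k 1 := rfl

lemma Dd_contDiff {g : Vec n → ℂ} (v : Vec n) (hg : ContDiff ℝ (⊤ : ℕ∞) g) :
    ContDiff ℝ (⊤ : ℕ∞) (Dd v g) :=
  (hg.fderiv_right (m := (⊤ : ℕ∞)) (by exact_mod_cast (le_top : (⊤:ℕ∞)+1 ≤ ⊤))).clm_apply
    contDiff_const

lemma ContDiff.diff {F : Type*} [NormedAddCommGroup F] [NormedSpace ℝ F] {g : Vec n → F}
    (hg : ContDiff ℝ (⊤ : ℕ∞) g) : Differentiable ℝ g :=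
  hg.differentiable (by simp)

lemma Dd_comm {g : Vec n → ℂ} (hg : ContDiff ℝ (⊤ : ℕ∞) g) (v w : Vec n) :
    Dd v (Dd w g) = Dd w (Dd v g) := by
  funext p
  have hdg : Differentiable ℝ g := hg.diff
  have hdfg : Differentiable ℝ (fderiv ℝ g) :=
    ((hg.fderiv_right (m := (⊤ : ℕ∞)) (by exact_mod_cast (le_top : (⊤:ℕ∞)+1 ≤ ⊤)))).diff
  have key : ∀ a b : Vec n, Dd a (Dd b g) p = fderiv ℝ (fderiv ℝ g) p a b := by
    intro a b
    have h1 : Dd b g = fun q => (fderiv ℝ g q) b := rfl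
    rw [Dd, h1, fderiv_clm_apply (hdfg p) (differentiableAt_const b)]
    simp
  rw [key, key]
  exact second_derivative_symmetric (fun y => (hdg y).hasFDerivAt) (hdfg p).hasFDerivAt v w

lemma hasDerivAt_line (p : Vec n) (v : Vec n) (a t : ℝ) :
    HasDerivAt (fun t : ℝ => p + (t - a) • v) v t := by
  simpa using (((hasDerivAt_id t).sub_const a).smul_const v).const_add p

lemma update_eq_line (x : Fin n → ℝ) (j : Fin n) (t : ℝ) :
    Function.update x j t = x + (t - x j) • (Pi.single j 1 : Fin n → ℝ) := by
  funext k
  rcases eq_or_ne k j with h | h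
  · subst h; simp [Function.update_self]
  · simp [Function.update_of_ne h, Pi.single_apply, h]

lemma pdx_eq (j : Fin n) (g : Vec n → ℂ) (hg : Differentiable ℝ g) (p : Vec n) :
    pdx n j g p = Dd (eX n j) g p := by
  have hc : (fun t : ℝ => g (Function.update p.1 j t, p.2.1, p.2.2))
      = fun t => g (p + (t - p.1 j) • eX n j) := by
    funext t
    congr 1
    refine Prod.ext ?_ (Prod.ext ?_ ?_)
    · simpa [eX] using update_eq_line p.1 j t
    · simp [eX]
    · simp [eX]
  have hg' : HasFDerivAt g (fderiv ℝ g p) (p + ((p.1 j) - p.1 j) • eX n j) := by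
    simpa using (hg p).hasFDerivAt
  have := hg'.comp_hasDerivAt (p.1 j) (hasDerivAt_line p (eX n j) (p.1 j) (p.1 j))
  rw [pdx, hc]
  exact this.deriv

lemma pdy_eq (j : Fin n) (g : Vec n → ℂ) (hg : Differentiable ℝ g) (p : Vec n) :
    pdy n j g p = Dd (eY n j) g p := by
  have hc : (fun t : ℝ => g (p.1, Function.update p.2.1 j t, p.2.2))
      = fun t => g (p + (t - p.2.1 j) • eY n j) := by
    funext t
    congr 1
    refine Prod.ext ?_ (Prod.ext ?_ ?_)
    · simp [eY]
    · simpa [eY] using update_eq_line p.2.1 j t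
    · simp [eY]
  have hg' : HasFDerivAt g (fderiv ℝ g p) (p + ((p.2.1 j) - p.2.1 j) • eY n j) := by
    simpa using (hg p).hasFDerivAt
  have := hg'.comp_hasDerivAt (p.2.1 j) (hasDerivAt_line p (eY n j) (p.2.1 j) (p.2.1 j))
  rw [pdy, hc]
  exact this.deriv

lemma pdq_eq (j : Fin n) (g : Vec n → ℂ) (hg : Differentiable ℝ g) (p : Vec n) :
    pdq n j g p = Dd (eQ n j) g p := by
  have hc : (fun t : ℝ => g (p.1, p.2.1, Function.update p.2.2 j t))
      = fun t => g (p + (t - p.2.2 j) • eQ n j) := by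
    funext t
    congr 1
    refine Prod.ext ?_ (Prod.ext ?_ ?_)
    · simp [eQ]
    · simp [eQ]
    · simpa [eQ] using update_eq_line p.2.2 j t
  have hg' : HasFDerivAt g (fderiv ℝ g p) (p + ((p.2.2 j) - p.2.2 j) • eQ n j) := by
    simpa using (hg p).hasFDerivAt
  have := hg'.comp_hasDerivAt (p.2.2 j) (hasDerivAt_line p (eQ n j) (p.2.2 j) (p.2.2 j))
  rw [pdq, hc]
  exact this.deriv

lemma Dd_zero (v : Vec n) : Dd v (fun _ : Vec n => (0:ℂ)) = fun _ => 0 := by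
  funext p; simp [Dd]

lemma Dd_sum (v : Vec n) (F : Fin n → Vec n → ℂ) (p : Vec n)
    (hF : ∀ j, DifferentiableAt ℝ (F j) p) :
    Dd v (fun q => ∑ j, F j q) p = ∑ j, Dd v (F j) p := by
  rw [Dd, fderiv_fun_sum (fun j _ => hF j)]
  simp [Dd]

lemma Dd_add {g h : Vec n → ℂ} (v : Vec n) (p : Vec n)
    (hg : DifferentiableAt ℝ g p) (hh : DifferentiableAt ℝ h p) :
    Dd v (fun q => g q + h q) p = Dd v g p + Dd v h p := by
  simp [Dd, fderiv_fun_add hg hh]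

lemma Dd_neg {g : Vec n → ℂ} (v : Vec n) (p : Vec n) :
    Dd v (fun q => -(g q)) p = -(Dd v g p) := by
  simp [Dd, fderiv_neg]

lemma Dd_const_mul {g : Vec n → ℂ} (c : ℂ) (v : Vec n) (p : Vec n)
    (hg : DifferentiableAt ℝ g p) :
    Dd v (fun q => c * g q) p = c * Dd v g p := by
  simp [Dd, fderiv_const_mul hg c]

/-- The coordinate `q_j` as a continuous linear map. -/
noncomputable def qCLM (n : ℕ) (j : Fin n) : Vec n →L[ℝ] ℂ :=
  Complex.ofRealCLM.comp ((ContinuousLinearMap.proj j).comp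
    ((ContinuousLinearMap.snd ℝ (Fin n → ℝ) (Fin n → ℝ)).comp
      (ContinuousLinearMap.snd ℝ (Fin n → ℝ) ((Fin n → ℝ) × (Fin n → ℝ)))))

@[simp] lemma qCLM_apply (j : Fin n) (v : Vec n) : qCLM n j v = (v.2.2 j : ℂ) := rfl

lemma Dd_coordq_mul {g : Vec n → ℂ} (j : Fin n) (v : Vec n) (p : Vec n)
    (hg : DifferentiableAt ℝ g p) :
    Dd v (fun q => ((q.2.2 j : ℝ) : ℂ) * g q) p
      = (v.2.2 j : ℂ) * g p + (p.2.2 j : ℂ) * Dd v g p := by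
  have hq : (fun q : Vec n => ((q.2.2 j : ℝ) : ℂ)) = fun q => qCLM n j q := rfl
  have hqd : DifferentiableAt ℝ (fun q : Vec n => ((q.2.2 j : ℝ) : ℂ)) p := by
    rw [hq]; exact (qCLM n j).differentiableAt
  rw [Dd, fderiv_fun_mul hqd hg]
  have hfq : fderiv ℝ (fun q : Vec n => ((q.2.2 j : ℝ) : ℂ)) p = qCLM n j := by
    rw [hq]; exact (qCLM n j).fderiv
  simp [hfq, Dd]
  ring

lemma Dd_affine {A B : Vec n → ℂ} (c : ℂ) (v : Vec n) (p : Vec n)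
    (hA : DifferentiableAt ℝ A p) (hB : DifferentiableAt ℝ B p) :
    Dd v (fun q => c * A q + -(B q)) p = c * Dd v A p - Dd v B p := by
  have d1 : DifferentiableAt ℝ (fun q => c * A q) p := hA.const_mul c
  have d2 : DifferentiableAt ℝ (fun q : Vec n => -(B q)) p := hB.neg
  simp only [Dd]
  rw [fderiv_fun_add d1 d2, fderiv_const_mul hA, fderiv_fun_neg]
  simp
  ring

lemma Dd_affine' {A B : Vec n → ℂ} (c : ℂ) (v : Vec n) (p : Vec n)
    (hA : DifferentiableAt ℝ A p) (hB : DifferentiableAt ℝ B p) :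
    Dd v (fun q => c * A q + B q) p = c * Dd v A p + Dd v B p := by
  have d1 : DifferentiableAt ℝ (fun q => c * A q) p := hA.const_mul c
  simp only [Dd]
  rw [fderiv_fun_add d1 hB, fderiv_const_mul hA]
  simp

lemma Dd_expand (v : Vec n) (g h : Fin n → Vec n → ℂ)
    (hg : ∀ j, ContDiff ℝ (⊤ : ℕ∞) (g j)) (hh : ∀ j, ContDiff ℝ (⊤ : ℕ∞) (h j)) (p : Vec n) :
    Dd v (fun q => ∑ j, (Complex.I * (q.2.2 j : ℂ) * g j q + h j q)) p
      = ∑ j, (Complex.I * (v.2.2 j : ℂ) * g j p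
          + Complex.I * (p.2.2 j : ℂ) * Dd v (g j) p + Dd v (h j) p) := by
  have hdg : ∀ j, DifferentiableAt ℝ (g j) p := fun j => (hg j).diff p
  have hdh : ∀ j, DifferentiableAt ℝ (h j) p := fun j => (hh j).diff p
  have hcoord : ∀ j : Fin n, DifferentiableAt ℝ (fun q : Vec n => ((q.2.2 j : ℝ) : ℂ)) p :=
    fun j => (qCLM n j).differentiableAt
  have hterm : ∀ j : Fin n,
      DifferentiableAt ℝ (fun q : Vec n => Complex.I * ((q.2.2 j : ℝ) : ℂ) * g j q + h j q) p := by
    intro j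
    exact (((differentiableAt_const Complex.I).mul (hcoord j)).mul (hdg j)).add (hdh j)
  rw [Dd_sum v _ p hterm]
  refine Finset.sum_congr rfl fun j _ => ?_
  have hre : (fun q : Vec n => Complex.I * ((q.2.2 j : ℝ) : ℂ) * g j q + h j q)
      = fun q => Complex.I * (((q.2.2 j : ℝ) : ℂ) * g j q) + h j q := by
    funext q; ring
  rw [hre, Dd_add (g := fun q => Complex.I * (((q.2.2 j : ℝ) : ℂ) * g j q)) v p
      (((hcoord j).mul (hdg j)).const_mul Complex.I) (hdh j),
    Dd_const_mul (g := fun q => ((q.2.2 j : ℝ) : ℂ) * g j q) _ v p ((hcoord j).mul (hdg j)), Dd_coordq_mul j v p (hdg j)]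
  ring

end Aux

theorem h_monogenic_implies_harmonic
    (n : ℕ) (hn : 1 ≤ n) (f : Vec n → ℂ) (hf : ContDiff ℝ (⊤ : ℕ∞) f)
    (hDs : Ds n f = fun _ => 0) (hDt : Dt n f = fun _ => 0) :
    Lap n f = fun _ => 0 := by
  classical
  have hfd : Differentiable ℝ f := hf.diff
  have c1 : ∀ v : Vec n, ContDiff ℝ (⊤:ℕ∞) (Dd v f) := fun v => Dd_contDiff v hf
  have c2 : ∀ v w : Vec n, ContDiff ℝ (⊤:ℕ∞) (Dd v (Dd w f)) := fun v w => Dd_contDiff v (c1 w)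
  have c3 : ∀ u v w : Vec n, ContDiff ℝ (⊤:ℕ∞) (Dd u (Dd v (Dd w f))) :=
    fun u v w => Dd_contDiff u (c2 v w)
  have hpdx : ∀ j, pdx n j f = Dd (eX n j) f := fun j => funext fun p => pdx_eq j f hfd p
  have hpdy : ∀ j, pdy n j f = Dd (eY n j) f := fun j => funext fun p => pdy_eq j f hfd p
  have hpdq : ∀ j, pdq n j f = Dd (eQ n j) f := fun j => funext fun p => pdq_eq j f hfd p
  -- rewrite Ds and Dt through directional derivatives
  have hDsE : Ds n f = fun q => ∑ j, (Complex.I * (q.2.2 j : ℂ) * Dd (eY n j) f q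
      + -(Dd (eQ n j) (Dd (eX n j) f) q)) := by
    funext q
    rw [Ds]
    refine Finset.sum_congr rfl fun j _ => ?_
    rw [pdy_eq j f hfd q, hpdx j, pdq_eq j _ ((c1 _).diff) q]
    ring
  have hDtE : Dt n f = fun q => ∑ j, (Complex.I * (q.2.2 j : ℂ) * Dd (eX n j) f q
      + Dd (eY n j) (Dd (eQ n j) f) q) := by
    funext q
    rw [Dt]
    refine Finset.sum_congr rfl fun j _ => ?_
    rw [pdx_eq j f hfd q, hpdq j, pdy_eq j _ ((c1 _).diff) q]
  -- first-level expansions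
  have expDs : ∀ (v : Vec n) (p : Vec n), Dd v (Ds n f) p
      = ∑ j, (Complex.I * (v.2.2 j : ℂ) * Dd (eY n j) f p
        + Complex.I * (p.2.2 j : ℂ) * Dd v (Dd (eY n j) f) p
        - Dd v (Dd (eQ n j) (Dd (eX n j) f)) p) := by
    intro v p
    rw [hDsE]
    refine (Dd_expand v (fun j => Dd (eY n j) f)
      (fun j q => -(Dd (eQ n j) (Dd (eX n j) f) q))
      (fun j => c1 _) (fun j => (c2 _ _).neg) p).trans ?_
    refine Finset.sum_congr rfl fun j _ => ?_
    rw [Dd_neg]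
    ring
  have expDt : ∀ (v : Vec n) (p : Vec n), Dd v (Dt n f) p
      = ∑ j, (Complex.I * (v.2.2 j : ℂ) * Dd (eX n j) f p
        + Complex.I * (p.2.2 j : ℂ) * Dd v (Dd (eX n j) f) p
        + Dd v (Dd (eY n j) (Dd (eQ n j) f)) p) := by
    intro v p
    rw [hDtE]
    exact Dd_expand v (fun j => Dd (eX n j) f)
      (fun j => Dd (eY n j) (Dd (eQ n j) f)) (fun j => c1 _) (fun j => c2 _ _) p
  -- the four families of equations
  have eqA : ∀ (k : Fin n) (p : Vec n),
      ∑ j, (Complex.I * (p.2.2 j : ℂ) * Dd (eX n k) (Dd (eY n j) f) p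
        - Dd (eX n k) (Dd (eQ n j) (Dd (eX n j) f)) p) = 0 := by
    intro k p
    have h0 : Dd (eX n k) (Ds n f) p = 0 := by
      rw [hDs]; exact congrFun (Dd_zero _) p
    rw [expDs (eX n k) p] at h0
    rw [← h0]
    refine Finset.sum_congr rfl fun j _ => ?_
    simp only [eX_22, Pi.zero_apply, Complex.ofReal_zero]
    ring
  have eqC : ∀ (k : Fin n) (p : Vec n),
      ∑ j, (Complex.I * (p.2.2 j : ℂ) * Dd (eY n k) (Dd (eX n j) f) p
        + Dd (eY n k) (Dd (eY n j) (Dd (eQ n j) f)) p) = 0 := by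
    intro k p
    have h0 : Dd (eY n k) (Dt n f) p = 0 := by
      rw [hDt]; exact congrFun (Dd_zero _) p
    rw [expDt (eY n k) p] at h0
    rw [← h0]
    refine Finset.sum_congr rfl fun j _ => ?_
    simp only [eY_22, Pi.zero_apply, Complex.ofReal_zero]
    ring
  -- second-level expansions
  have hQS : ∀ k : Fin n, Dd (eQ n k) (Ds n f)
      = fun q => ∑ j, (Complex.I * (q.2.2 j : ℂ) * Dd (eQ n k) (Dd (eY n j) f) q
        + (Complex.I * (((eQ n k).2.2 j : ℝ) : ℂ) * Dd (eY n j) f q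
          + -(Dd (eQ n k) (Dd (eQ n j) (Dd (eX n j) f)) q))) := by
    intro k
    funext q
    exact (expDs (eQ n k) q).trans (Finset.sum_congr rfl fun j _ => by ring)
  have hQT : ∀ k : Fin n, Dd (eQ n k) (Dt n f)
      = fun q => ∑ j, (Complex.I * (q.2.2 j : ℂ) * Dd (eQ n k) (Dd (eX n j) f) q
        + (Complex.I * (((eQ n k).2.2 j : ℝ) : ℂ) * Dd (eX n j) f q
          + Dd (eQ n k) (Dd (eY n j) (Dd (eQ n j) f)) q)) := by
    intro k
    funext q
    exact (expDt (eQ n k) q).trans (Finset.sum_congr rfl fun j _ => by ring)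
  have eqB : ∀ (k : Fin n) (p : Vec n),
      ∑ j, (Complex.I * (((eQ n k).2.2 j : ℝ) : ℂ) * Dd (eY n k) (Dd (eY n j) f) p
        + Complex.I * (p.2.2 j : ℂ) * Dd (eY n k) (Dd (eQ n k) (Dd (eY n j) f)) p
        - Dd (eY n k) (Dd (eQ n k) (Dd (eQ n j) (Dd (eX n j) f))) p) = 0 := by
    intro k p
    have h0 : Dd (eY n k) (Dd (eQ n k) (Ds n f)) p = 0 := by
      have hz : Dd (eQ n k) (Ds n f) = fun _ => (0:ℂ) := by
        rw [hDs]; exact Dd_zero _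
      rw [hz]; exact congrFun (Dd_zero _) p
    rw [hQS k] at h0
    have key := Dd_expand (eY n k) (fun j => Dd (eQ n k) (Dd (eY n j) f))
      (fun j q => Complex.I * (((eQ n k).2.2 j : ℝ) : ℂ) * Dd (eY n j) f q
        + -(Dd (eQ n k) (Dd (eQ n j) (Dd (eX n j) f)) q))
      (fun j => c2 _ _)
      (fun j => (contDiff_const.mul (c1 _)).add ((c3 _ _ _).neg)) p
    have h1 := key.symm.trans h0
    rw [← h1]
    refine Finset.sum_congr rfl fun j _ => ?_
    rw [Dd_affine _ _ _ ((c1 _).diff p) ((c3 _ _ _).diff p)]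
    simp only [eY_22, Pi.zero_apply, Complex.ofReal_zero]
    ring
  have eqE : ∀ (k : Fin n) (p : Vec n),
      ∑ j, (Complex.I * (((eQ n k).2.2 j : ℝ) : ℂ) * Dd (eX n k) (Dd (eX n j) f) p
        + Complex.I * (p.2.2 j : ℂ) * Dd (eX n k) (Dd (eQ n k) (Dd (eX n j) f)) p
        + Dd (eX n k) (Dd (eQ n k) (Dd (eY n j) (Dd (eQ n j) f))) p) = 0 := by
    intro k p
    have h0 : Dd (eX n k) (Dd (eQ n k) (Dt n f)) p = 0 := by
      have hz : Dd (eQ n k) (Dt n f) = fun _ => (0:ℂ) := by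
        rw [hDt]; exact Dd_zero _
      rw [hz]; exact congrFun (Dd_zero _) p
    rw [hQT k] at h0
    have key := Dd_expand (eX n k) (fun j => Dd (eQ n k) (Dd (eX n j) f))
      (fun j q => Complex.I * (((eQ n k).2.2 j : ℝ) : ℂ) * Dd (eX n j) f q
        + Dd (eQ n k) (Dd (eY n j) (Dd (eQ n j) f)) q)
      (fun j => c2 _ _)
      (fun j => (contDiff_const.mul (c1 _)).add (c3 _ _ _)) p
    have h1 := key.symm.trans h0
    rw [← h1]
    refine Finset.sum_congr rfl fun j _ => ?_
    rw [Dd_affine' _ _ _ ((c1 _).diff p) ((c3 _ _ _).diff p)]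
    simp only [eX_22, Pi.zero_apply, Complex.ofReal_zero]
    ring
  -- final assembly, pointwise
  funext p
  show Lap n f p = 0
  have hLap : Lap n f p
      = ∑ k, (Dd (eX n k) (Dd (eX n k) f) p + Dd (eY n k) (Dd (eY n k) f) p) := by
    rw [Lap]
    refine Finset.sum_congr rfl fun k _ => ?_
    rw [hpdx k, hpdy k, pdx_eq k _ ((c1 _).diff) p, pdy_eq k _ ((c1 _).diff) p]
  rw [hLap]
    -- combined double sum equals zero
  have hZ : ∑ k, ∑ j,
      (Complex.I * (p.2.2 k : ℂ) * (Complex.I * (p.2.2 j : ℂ) * Dd (eX n k) (Dd (eY n j) f) p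
          - Dd (eX n k) (Dd (eQ n j) (Dd (eX n j) f)) p)
        + (Complex.I * (((eQ n k).2.2 j : ℝ) : ℂ) * Dd (eY n k) (Dd (eY n j) f) p
          + Complex.I * (p.2.2 j : ℂ) * Dd (eY n k) (Dd (eQ n k) (Dd (eY n j) f)) p
          - Dd (eY n k) (Dd (eQ n k) (Dd (eQ n j) (Dd (eX n j) f))) p)
        - Complex.I * (p.2.2 k : ℂ) * (Complex.I * (p.2.2 j : ℂ) * Dd (eY n k) (Dd (eX n j) f) p
          + Dd (eY n k) (Dd (eY n j) (Dd (eQ n j) f)) p)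
        + (Complex.I * (((eQ n k).2.2 j : ℝ) : ℂ) * Dd (eX n k) (Dd (eX n j) f) p
          + Complex.I * (p.2.2 j : ℂ) * Dd (eX n k) (Dd (eQ n k) (Dd (eX n j) f)) p
          + Dd (eX n k) (Dd (eQ n k) (Dd (eY n j) (Dd (eQ n j) f))) p)) = 0 := by
    refine Finset.sum_eq_zero fun k _ => ?_
    rw [show (0:ℂ) = Complex.I * (p.2.2 k : ℂ) *
        (∑ j, (Complex.I * (p.2.2 j : ℂ) * Dd (eX n k) (Dd (eY n j) f) p
          - Dd (eX n k) (Dd (eQ n j) (Dd (eX n j) f)) p))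
        + (∑ j, (Complex.I * (((eQ n k).2.2 j : ℝ) : ℂ) * Dd (eY n k) (Dd (eY n j) f) p
          + Complex.I * (p.2.2 j : ℂ) * Dd (eY n k) (Dd (eQ n k) (Dd (eY n j) f)) p
          - Dd (eY n k) (Dd (eQ n k) (Dd (eQ n j) (Dd (eX n j) f))) p))
        - Complex.I * (p.2.2 k : ℂ) *
        (∑ j, (Complex.I * (p.2.2 j : ℂ) * Dd (eY n k) (Dd (eX n j) f) p
          + Dd (eY n k) (Dd (eY n j) (Dd (eQ n j) f)) p))
        + (∑ j, (Complex.I * (((eQ n k).2.2 j : ℝ) : ℂ) * Dd (eX n k) (Dd (eX n j) f) p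
          + Complex.I * (p.2.2 j : ℂ) * Dd (eX n k) (Dd (eQ n k) (Dd (eX n j) f)) p
          + Dd (eX n k) (Dd (eQ n k) (Dd (eY n j) (Dd (eQ n j) f))) p)) from by
      rw [eqA k p, eqB k p, eqC k p, eqE k p]; ring]
    rw [Finset.mul_sum, Finset.mul_sum, ← Finset.sum_add_distrib, ← Finset.sum_sub_distrib,
      ← Finset.sum_add_distrib]
  -- split into five double sums
  have hsum : ∑ k, ∑ j,
      (Complex.I * (p.2.2 k : ℂ) * (Complex.I * (p.2.2 j : ℂ) * Dd (eX n k) (Dd (eY n j) f) p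
          - Dd (eX n k) (Dd (eQ n j) (Dd (eX n j) f)) p)
        + (Complex.I * (((eQ n k).2.2 j : ℝ) : ℂ) * Dd (eY n k) (Dd (eY n j) f) p
          + Complex.I * (p.2.2 j : ℂ) * Dd (eY n k) (Dd (eQ n k) (Dd (eY n j) f)) p
          - Dd (eY n k) (Dd (eQ n k) (Dd (eQ n j) (Dd (eX n j) f))) p)
        - Complex.I * (p.2.2 k : ℂ) * (Complex.I * (p.2.2 j : ℂ) * Dd (eY n k) (Dd (eX n j) f) p
          + Dd (eY n k) (Dd (eY n j) (Dd (eQ n j) f)) p)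
        + (Complex.I * (((eQ n k).2.2 j : ℝ) : ℂ) * Dd (eX n k) (Dd (eX n j) f) p
          + Complex.I * (p.2.2 j : ℂ) * Dd (eX n k) (Dd (eQ n k) (Dd (eX n j) f)) p
          + Dd (eX n k) (Dd (eQ n k) (Dd (eY n j) (Dd (eQ n j) f))) p))
      = (∑ k, ∑ j, ((p.2.2 k : ℂ) * (p.2.2 j : ℂ) * Dd (eY n k) (Dd (eX n j) f) p
            - (p.2.2 k : ℂ) * (p.2.2 j : ℂ) * Dd (eX n k) (Dd (eY n j) f) p))
        + (∑ k, ∑ j, (Complex.I * (p.2.2 j : ℂ) * Dd (eX n k) (Dd (eQ n k) (Dd (eX n j) f)) p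
            - Complex.I * (p.2.2 k : ℂ) * Dd (eX n k) (Dd (eQ n j) (Dd (eX n j) f)) p))
        + (∑ k, ∑ j, (Complex.I * (p.2.2 j : ℂ) * Dd (eY n k) (Dd (eQ n k) (Dd (eY n j) f)) p
            - Complex.I * (p.2.2 k : ℂ) * Dd (eY n k) (Dd (eY n j) (Dd (eQ n j) f)) p))
        + (∑ k, ∑ j, (Dd (eX n k) (Dd (eQ n k) (Dd (eY n j) (Dd (eQ n j) f))) p
            - Dd (eY n k) (Dd (eQ n k) (Dd (eQ n j) (Dd (eX n j) f))) p))
        + (∑ k, ∑ j, (Complex.I * (((eQ n k).2.2 j : ℝ) : ℂ) * Dd (eX n k) (Dd (eX n j) f) p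
            + Complex.I * (((eQ n k).2.2 j : ℝ) : ℂ) * Dd (eY n k) (Dd (eY n j) f) p)) := by
    rw [← Finset.sum_add_distrib, ← Finset.sum_add_distrib, ← Finset.sum_add_distrib,
      ← Finset.sum_add_distrib]
    refine Finset.sum_congr rfl fun k _ => ?_
    rw [← Finset.sum_add_distrib, ← Finset.sum_add_distrib, ← Finset.sum_add_distrib,
      ← Finset.sum_add_distrib]
    refine Finset.sum_congr rfl fun j _ => ?_
    linear_combination ((p.2.2 k : ℂ) * (p.2.2 j : ℂ) * Dd (eX n k) (Dd (eY n j) f) p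
      - (p.2.2 k : ℂ) * (p.2.2 j : ℂ) * Dd (eY n k) (Dd (eX n j) f) p) * Complex.I_sq
  -- the four cancellations
  have hT1 : ∑ k, ∑ j, ((p.2.2 k : ℂ) * (p.2.2 j : ℂ) * Dd (eY n k) (Dd (eX n j) f) p
      - (p.2.2 k : ℂ) * (p.2.2 j : ℂ) * Dd (eX n k) (Dd (eY n j) f) p) = 0 := by
    have e1 : ∑ k, ∑ j, ((p.2.2 k : ℂ) * (p.2.2 j : ℂ) * Dd (eY n k) (Dd (eX n j) f) p)
        = ∑ k, ∑ j, ((p.2.2 k : ℂ) * (p.2.2 j : ℂ) * Dd (eX n k) (Dd (eY n j) f) p) := by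
      rw [Finset.sum_comm]
      refine Finset.sum_congr rfl fun a _ => Finset.sum_congr rfl fun b _ => ?_
      rw [Dd_comm hf (eY n b) (eX n a)]
      ring
    rw [Finset.sum_congr rfl fun k _ => Finset.sum_sub_distrib _ _,
      Finset.sum_sub_distrib, e1, sub_self]
  have hT2 : ∑ k, ∑ j, (Complex.I * (p.2.2 j : ℂ) * Dd (eX n k) (Dd (eQ n k) (Dd (eX n j) f)) p
      - Complex.I * (p.2.2 k : ℂ) * Dd (eX n k) (Dd (eQ n j) (Dd (eX n j) f)) p) = 0 := by
    have e2 : ∑ k, ∑ j, (Complex.I * (p.2.2 j : ℂ) * Dd (eX n k) (Dd (eQ n k) (Dd (eX n j) f)) p)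
        = ∑ k, ∑ j, (Complex.I * (p.2.2 k : ℂ) * Dd (eX n k) (Dd (eQ n j) (Dd (eX n j) f)) p) := by
      rw [Finset.sum_comm]
      refine Finset.sum_congr rfl fun a _ => Finset.sum_congr rfl fun b _ => ?_
      rw [Dd_comm hf (eQ n b) (eX n a), Dd_comm (Dd_contDiff (eQ n b) hf) (eX n b) (eX n a),
        Dd_comm hf (eX n b) (eQ n b)]
    rw [Finset.sum_congr rfl fun k _ => Finset.sum_sub_distrib _ _,
      Finset.sum_sub_distrib, e2, sub_self]
  have hT3 : ∑ k, ∑ j, (Complex.I * (p.2.2 j : ℂ) * Dd (eY n k) (Dd (eQ n k) (Dd (eY n j) f)) p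
      - Complex.I * (p.2.2 k : ℂ) * Dd (eY n k) (Dd (eY n j) (Dd (eQ n j) f)) p) = 0 := by
    have e3 : ∑ k, ∑ j, (Complex.I * (p.2.2 k : ℂ) * Dd (eY n k) (Dd (eY n j) (Dd (eQ n j) f)) p)
        = ∑ k, ∑ j, (Complex.I * (p.2.2 j : ℂ) * Dd (eY n k) (Dd (eQ n k) (Dd (eY n j) f)) p) := by
      rw [Finset.sum_comm]
      refine Finset.sum_congr rfl fun a _ => Finset.sum_congr rfl fun b _ => ?_
      rw [Dd_comm hf (eQ n a) (eY n b), Dd_comm (Dd_contDiff (eQ n a) hf) (eY n a) (eY n b)]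
    rw [Finset.sum_congr rfl fun k _ => Finset.sum_sub_distrib _ _,
      Finset.sum_sub_distrib, e3, sub_self]
  have hT4 : ∑ k, ∑ j, (Dd (eX n k) (Dd (eQ n k) (Dd (eY n j) (Dd (eQ n j) f))) p
      - Dd (eY n k) (Dd (eQ n k) (Dd (eQ n j) (Dd (eX n j) f))) p) = 0 := by
    have e4 : ∑ k, ∑ j, (Dd (eX n k) (Dd (eQ n k) (Dd (eY n j) (Dd (eQ n j) f))) p)
        = ∑ k, ∑ j, (Dd (eY n k) (Dd (eQ n k) (Dd (eQ n j) (Dd (eX n j) f))) p) := by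
      rw [Finset.sum_comm]
      refine Finset.sum_congr rfl fun a _ => Finset.sum_congr rfl fun b _ => ?_
      rw [Dd_comm hf (eQ n b) (eX n b), Dd_comm (Dd_contDiff (eQ n b) hf) (eQ n a) (eX n b),
        Dd_comm (Dd_contDiff (eQ n a) (Dd_contDiff (eQ n b) hf)) (eY n a) (eX n b),
        Dd_comm (Dd_contDiff (eQ n a) hf) (eQ n b) (eY n a),
        Dd_comm hf (eQ n b) (eQ n a)]
    rw [Finset.sum_congr rfl fun k _ => Finset.sum_sub_distrib _ _,
      Finset.sum_sub_distrib, e4, sub_self]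
  have hT5 : ∑ k, ∑ j, (Complex.I * (((eQ n k).2.2 j : ℝ) : ℂ) * Dd (eX n k) (Dd (eX n j) f) p
      + Complex.I * (((eQ n k).2.2 j : ℝ) : ℂ) * Dd (eY n k) (Dd (eY n j) f) p)
      = Complex.I * ∑ k, (Dd (eX n k) (Dd (eX n k) f) p + Dd (eY n k) (Dd (eY n k) f) p) := by
    rw [Finset.mul_sum]
    refine Finset.sum_congr rfl fun k _ => ?_
    have hite : ∀ j : Fin n,
        (Complex.I * (((eQ n k).2.2 j : ℝ) : ℂ) * Dd (eX n k) (Dd (eX n j) f) p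
          + Complex.I * (((eQ n k).2.2 j : ℝ) : ℂ) * Dd (eY n k) (Dd (eY n j) f) p)
        = if j = k then
            Complex.I * (Dd (eX n k) (Dd (eX n j) f) p + Dd (eY n k) (Dd (eY n j) f) p)
          else 0 := by
      intro j
      rcases eq_or_ne j k with h | h
      · subst h
        simp only [eQ_22, Pi.single_apply, if_pos rfl, Complex.ofReal_one, if_true]
        ring
      · simp [Pi.single_apply, h]
    rw [Finset.sum_congr rfl fun j _ => hite j, Finset.sum_ite_eq' Finset.univ k]
    simp
  rw [hsum] at hZ
  rw [hT1, hT2, hT3, hT4, hT5] at hZ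
  simp only [zero_add] at hZ
  exact (mul_eq_zero.mp hZ).resolve_left Complex.I_ne_zero
end
end

section
/- Let n ≥ 1. For every smooth function f : ℝ^n × ℝ^n × ℝ^n → ℂ one has X_s(X_t f) − X_t(X_s f) = −i ( Σ_{j=1}^n (x_j² + y_j²) ) f, i.e. the commutator [X_s, X_t] equals −i times the multiplication operator r² by the squared norm of (x,y). -/
open Complex Finset Matrix

noncomputable section

namespace CommAux

variable {n : ℕ}

noncomputable def vq (n : ℕ) (j : Fin n) : Vec n := (0, 0, Pi.single j 1)

lemma topadd : ((⊤:ℕ∞) : WithTop ℕ∞) + 1 ≤ ((⊤:ℕ∞) : WithTop ℕ∞) := by norm_cast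

lemma onele : ((⊤:ℕ∞) : WithTop ℕ∞) ≠ 0 := by
  simp

lemma curve_hasDerivAt (j : Fin n) (p : Vec n) (t : ℝ) :
    HasDerivAt (fun t : ℝ => ((p.1, p.2.1, Function.update p.2.2 j t) : Vec n)) (vq n j) t := by
  refine (hasDerivAt_const t p.1).prodMk ((hasDerivAt_const t p.2.1).prodMk ?_)
  rw [hasDerivAt_pi]
  intro i
  rcases eq_or_ne i j with h | h
  · subst h
    simpa [vq] using (hasDerivAt_id' t)
  · simpa [Function.update_of_ne h, vq, Pi.single_eq_of_ne h] using hasDerivAt_const t (p.2.2 i)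

lemma curve_eq (j : Fin n) (p : Vec n) :
    ((p.1, p.2.1, Function.update p.2.2 j (p.2.2 j)) : Vec n) = p := by simp

lemma hasDerivAt_comp_curve {f : Vec n → ℂ} {p : Vec n} (j : Fin n)
    (hf : DifferentiableAt ℝ f p) :
    HasDerivAt (fun t => f (p.1, p.2.1, Function.update p.2.2 j t))
      (fderiv ℝ f p (vq n j)) (p.2.2 j) := by
  have h2 : HasFDerivAt f (fderiv ℝ f p)
      ((fun t : ℝ => ((p.1, p.2.1, Function.update p.2.2 j t) : Vec n)) (p.2.2 j)) := by
    simpa [curve_eq j p] using hf.hasFDerivAt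
  exact h2.comp_hasDerivAt (p.2.2 j) (curve_hasDerivAt j p (p.2.2 j))

lemma pdq_eq {f : Vec n → ℂ} {p : Vec n} (j : Fin n) (hf : DifferentiableAt ℝ f p) :
    pdq n j f p = fderiv ℝ f p (vq n j) := (hasDerivAt_comp_curve j hf).deriv

lemma pdq_fun_eq {f : Vec n → ℂ} (hf : ContDiff ℝ (⊤:ℕ∞) f) (j : Fin n) :
    pdq n j f = fun p => fderiv ℝ f p (vq n j) :=
  funext fun p => pdq_eq j ((hf.differentiable onele).differentiableAt)

lemma contDiff_pdq {f : Vec n → ℂ} (hf : ContDiff ℝ (⊤:ℕ∞) f) (j : Fin n) :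
    ContDiff ℝ (⊤:ℕ∞) (pdq n j f) := by
  rw [pdq_fun_eq hf j]
  exact (hf.fderiv_right topadd).clm_apply contDiff_const

lemma pdq_comm {f : Vec n → ℂ} (hf : ContDiff ℝ (⊤:ℕ∞) f) (j k : Fin n) (p : Vec n) :
    pdq n j (pdq n k f) p = pdq n k (pdq n j f) p := by
  have hD : DifferentiableAt ℝ (fderiv ℝ f) p :=
    ((hf.fderiv_right topadd).differentiable onele).differentiableAt
  have key : ∀ v w : Vec n, fderiv ℝ (fun p => fderiv ℝ f p v) p w
      = fderiv ℝ (fderiv ℝ f) p w v := by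
    intro v w
    have h := ((ContinuousLinearMap.apply ℝ ℂ v).hasFDerivAt.comp p hD.hasFDerivAt).fderiv
    have e : (fun p => fderiv ℝ f p v)
        = (ContinuousLinearMap.apply ℝ ℂ v) ∘ (fderiv ℝ f) := rfl
    rw [e, h]; rfl
  have hsym := hf.contDiffAt.isSymmSndFDerivAt (by rw [minSmoothness_of_isRCLikeNormedField]; exact WithTop.coe_le_coe.2 le_top) (x := p)
  rw [pdq_eq j ((contDiff_pdq hf k).differentiable onele).differentiableAt,
      pdq_eq k ((contDiff_pdq hf j).differentiable onele).differentiableAt,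
      pdq_fun_eq hf k, pdq_fun_eq hf j, key, key]
  exact hsym _ _

lemma diff_cx (k : Fin n) : Differentiable ℝ (fun p : Vec n => ((p.1 k : ℝ) : ℂ)) :=
  Complex.ofRealCLM.differentiable.comp (by fun_prop)
lemma diff_cy (k : Fin n) : Differentiable ℝ (fun p : Vec n => ((p.2.1 k : ℝ) : ℂ)) :=
  Complex.ofRealCLM.differentiable.comp (by fun_prop)
lemma diff_cq (k : Fin n) : Differentiable ℝ (fun p : Vec n => ((p.2.2 k : ℝ) : ℂ)) :=
  Complex.ofRealCLM.differentiable.comp (by fun_prop)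

lemma pdq_mul {a b : Vec n → ℂ} {p : Vec n} (j : Fin n)
    (ha : DifferentiableAt ℝ a p) (hb : DifferentiableAt ℝ b p) :
    pdq n j (fun p => a p * b p) p = pdq n j a p * b p + a p * pdq n j b p := by
  have h := ((hasDerivAt_comp_curve j ha).fun_mul (hasDerivAt_comp_curve j hb)).deriv
  rw [pdq_eq j ha, pdq_eq j hb]
  simpa [pdq, curve_eq j p] using h

lemma pdq_sum {g : Fin n → Vec n → ℂ} {p : Vec n} (j : Fin n)
    (hg : ∀ k, DifferentiableAt ℝ (g k) p) :
    pdq n j (fun p => ∑ k : Fin n, g k p) p = ∑ k : Fin n, pdq n j (g k) p := by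
  have h := (HasDerivAt.fun_sum (u := Finset.univ) (fun k _ => hasDerivAt_comp_curve j (hg k))).deriv
  simp only [pdq_eq j (hg _)]
  simpa [pdq] using h

lemma pdq_sub {a b : Vec n → ℂ} {p : Vec n} (j : Fin n)
    (ha : DifferentiableAt ℝ a p) (hb : DifferentiableAt ℝ b p) :
    pdq n j (fun p => a p - b p) p = pdq n j a p - pdq n j b p := by
  have h := ((hasDerivAt_comp_curve j ha).fun_sub (hasDerivAt_comp_curve j hb)).deriv
  rw [pdq_eq j ha, pdq_eq j hb]
  simpa [pdq] using h

lemma pdq_add {a b : Vec n → ℂ} {p : Vec n} (j : Fin n)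
    (ha : DifferentiableAt ℝ a p) (hb : DifferentiableAt ℝ b p) :
    pdq n j (fun p => a p + b p) p = pdq n j a p + pdq n j b p := by
  have h := ((hasDerivAt_comp_curve j ha).fun_add (hasDerivAt_comp_curve j hb)).deriv
  rw [pdq_eq j ha, pdq_eq j hb]
  simpa [pdq] using h

lemma pdq_cx (j k : Fin n) (p : Vec n) : pdq n j (fun p : Vec n => ((p.1 k : ℝ) : ℂ)) p = 0 := by
  simp [pdq]

lemma pdq_cy (j k : Fin n) (p : Vec n) : pdq n j (fun p : Vec n => ((p.2.1 k : ℝ) : ℂ)) p = 0 := by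
  simp [pdq]

lemma pdq_cq (j k : Fin n) (p : Vec n) :
    pdq n j (fun p : Vec n => ((p.2.2 k : ℝ) : ℂ)) p = if k = j then 1 else 0 := by
  rcases eq_or_ne k j with h | h
  · subst h
    rw [if_pos rfl]
    simp only [pdq, Function.update_self]
    rw [show (fun t : ℝ => (t:ℂ)) = ⇑Complex.ofRealCLM from rfl,
      (Complex.ofRealCLM.hasDerivAt (x := p.2.2 k)).deriv]
    simp
  · rw [if_neg h]
    simp [pdq, Function.update_of_ne h]



lemma sum_skew (G : Fin n → Fin n → ℂ) (h : Fin n → ℂ) :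
    ∑ j : Fin n, ∑ k : Fin n, (G j k - G k j + (if k = j then h j else 0))
      = ∑ j : Fin n, h j := by
  simp only [Finset.sum_add_distrib, Finset.sum_sub_distrib, Finset.sum_ite_eq',
    Finset.mem_univ, if_true]
  rw [Finset.sum_comm (f := fun j k => G k j)]
  simp

lemma key_sum (a b c D : Fin n → ℂ) (D2 : Fin n → Fin n → ℂ) (F : ℂ)
    (hsym : ∀ j k, D2 j k = D2 k j) :
    (∑ j : Fin n, (b j * (∑ k : Fin n, (a k * D2 j k
        - Complex.I * b k * ((if k = j then 1 else 0) * F + c k * D j)))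
      + Complex.I * c j * a j * (∑ k : Fin n, (a k * D k - Complex.I * b k * c k * F))))
    - (∑ j : Fin n, (a j * (∑ k : Fin n, (b k * D2 j k
        + (Complex.I * (if k = j then 1 else 0) * a k * F + Complex.I * c k * a k * D j)))
      - Complex.I * b j * c j * (∑ k : Fin n, (b k * D k + Complex.I * c k * a k * F))))
    = -Complex.I * (∑ j : Fin n, (a j * a j + b j * b j)) * F := by
  have main : ∀ j : Fin n,
      (b j * (∑ k : Fin n, (a k * D2 j k
        - Complex.I * b k * ((if k = j then 1 else 0) * F + c k * D j)))
      + Complex.I * c j * a j * (∑ k : Fin n, (a k * D k - Complex.I * b k * c k * F)))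
      - (a j * (∑ k : Fin n, (b k * D2 j k
        + (Complex.I * (if k = j then 1 else 0) * a k * F + Complex.I * c k * a k * D j)))
      - Complex.I * b j * c j * (∑ k : Fin n, (b k * D k + Complex.I * c k * a k * F)))
      = ∑ k : Fin n,
          ((b j * a k * D2 j k + Complex.I * b j * c j * b k * D k
              + Complex.I * c j * a j * a k * D k + c j * a j * b k * c k * F)
            - (b k * a j * D2 k j + Complex.I * b k * c k * b j * D j
              + Complex.I * c k * a k * a j * D j + c k * a k * b j * c j * F)
          + (if k = j then -Complex.I * (a j * a j + b j * b j) * F else 0)) := by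
    intro j
    simp only [Finset.mul_sum, ← Finset.sum_add_distrib, ← Finset.sum_sub_distrib]
    refine Finset.sum_congr rfl fun k _ => ?_
    rcases eq_or_ne k j with h | h
    · subst h
      simp only [if_pos rfl]
      ring_nf
      simp only [if_true]
      ring
    · simp only [if_neg h, hsym k j]
      ring_nf
      simp only [Complex.I_sq]
      ring
  rw [← Finset.sum_sub_distrib]
  rw [Finset.sum_congr rfl fun j _ => main j]
  rw [sum_skew (fun j k => b j * a k * D2 j k + Complex.I * b j * c j * b k * D k
      + Complex.I * c j * a j * a k * D k + c j * a j * b k * c k * F)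
    (fun j => -Complex.I * (a j * a j + b j * b j) * F)]
  rw [← Finset.sum_mul, ← Finset.mul_sum]

variable {f : Vec n → ℂ}

lemma pdq_const (j : Fin n) (p : Vec n) (z : ℂ) : pdq n j (fun _ => z) p = 0 := by simp [pdq]

lemma pdq_t1 (hf : ContDiff ℝ (⊤:ℕ∞) f) (j k : Fin n) (p : Vec n) :
    pdq n j (fun p : Vec n => ((p.1 k : ℝ) : ℂ) * pdq n k f p) p
      = ((p.1 k : ℝ) : ℂ) * pdq n j (pdq n k f) p := by
  have h : pdq n j (fun p : Vec n => ((p.1 k : ℝ) : ℂ) * pdq n k f p) p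
      = pdq n j (fun p : Vec n => ((p.1 k : ℝ) : ℂ)) p * pdq n k f p
        + ((p.1 k : ℝ) : ℂ) * pdq n j (pdq n k f) p :=
    pdq_mul j ((diff_cx k).differentiableAt)
      (((contDiff_pdq hf k).differentiable onele).differentiableAt)
  rw [h, pdq_cx]; ring

lemma pdq_t3 (hf : ContDiff ℝ (⊤:ℕ∞) f) (j k : Fin n) (p : Vec n) :
    pdq n j (fun p : Vec n => ((p.2.1 k : ℝ) : ℂ) * pdq n k f p) p
      = ((p.2.1 k : ℝ) : ℂ) * pdq n j (pdq n k f) p := by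
  have h : pdq n j (fun p : Vec n => ((p.2.1 k : ℝ) : ℂ) * pdq n k f p) p
      = pdq n j (fun p : Vec n => ((p.2.1 k : ℝ) : ℂ)) p * pdq n k f p
        + ((p.2.1 k : ℝ) : ℂ) * pdq n j (pdq n k f) p :=
    pdq_mul j ((diff_cy k).differentiableAt)
      (((contDiff_pdq hf k).differentiable onele).differentiableAt)
  rw [h, pdq_cy]; ring

lemma pdq_t2 (hf : ContDiff ℝ (⊤:ℕ∞) f) (j k : Fin n) (p : Vec n) :
    pdq n j (fun p : Vec n => Complex.I * ((p.2.1 k : ℝ) : ℂ) * ((p.2.2 k : ℝ) : ℂ) * f p) p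
      = Complex.I * ((p.2.1 k : ℝ) : ℂ)
        * ((if k = j then 1 else 0) * f p + ((p.2.2 k : ℝ) : ℂ) * pdq n j f p) := by
  have hdf : DifferentiableAt ℝ f p := (hf.differentiable onele).differentiableAt
  have hb : DifferentiableAt ℝ (fun p : Vec n => Complex.I * ((p.2.1 k : ℝ) : ℂ)) p :=
    (differentiableAt_const _).mul ((diff_cy k).differentiableAt)
  have hbc : DifferentiableAt ℝ
      (fun p : Vec n => Complex.I * ((p.2.1 k : ℝ) : ℂ) * ((p.2.2 k : ℝ) : ℂ)) p :=
    hb.mul ((diff_cq k).differentiableAt)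
  have h2 : pdq n j (fun p : Vec n => Complex.I * ((p.2.1 k : ℝ) : ℂ) * ((p.2.2 k : ℝ) : ℂ) * f p) p
      = pdq n j (fun p : Vec n => Complex.I * ((p.2.1 k : ℝ) : ℂ) * ((p.2.2 k : ℝ) : ℂ)) p * f p
        + (Complex.I * ((p.2.1 k : ℝ) : ℂ) * ((p.2.2 k : ℝ) : ℂ)) * pdq n j f p :=
    pdq_mul j hbc hdf
  have h1 : pdq n j (fun p : Vec n => Complex.I * ((p.2.1 k : ℝ) : ℂ) * ((p.2.2 k : ℝ) : ℂ)) p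
      = pdq n j (fun p : Vec n => Complex.I * ((p.2.1 k : ℝ) : ℂ)) p * ((p.2.2 k : ℝ) : ℂ)
        + (Complex.I * ((p.2.1 k : ℝ) : ℂ)) * pdq n j (fun p : Vec n => ((p.2.2 k : ℝ) : ℂ)) p :=
    pdq_mul j hb ((diff_cq k).differentiableAt)
  have h0 : pdq n j (fun p : Vec n => Complex.I * ((p.2.1 k : ℝ) : ℂ)) p
      = pdq n j (fun _ : Vec n => Complex.I) p * ((p.2.1 k : ℝ) : ℂ)
        + Complex.I * pdq n j (fun p : Vec n => ((p.2.1 k : ℝ) : ℂ)) p :=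
    pdq_mul j (differentiableAt_const _) ((diff_cy k).differentiableAt)
  rw [h2, h1, h0, pdq_const, pdq_cy, pdq_cq]
  ring

lemma pdq_t4 (hf : ContDiff ℝ (⊤:ℕ∞) f) (j k : Fin n) (p : Vec n) :
    pdq n j (fun p : Vec n => Complex.I * ((p.2.2 k : ℝ) : ℂ) * ((p.1 k : ℝ) : ℂ) * f p) p
      = Complex.I * (if k = j then 1 else 0) * ((p.1 k : ℝ) : ℂ) * f p
        + Complex.I * ((p.2.2 k : ℝ) : ℂ) * ((p.1 k : ℝ) : ℂ) * pdq n j f p := by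
  have hdf : DifferentiableAt ℝ f p := (hf.differentiable onele).differentiableAt
  have hb : DifferentiableAt ℝ (fun p : Vec n => Complex.I * ((p.2.2 k : ℝ) : ℂ)) p :=
    (differentiableAt_const _).mul ((diff_cq k).differentiableAt)
  have hbc : DifferentiableAt ℝ
      (fun p : Vec n => Complex.I * ((p.2.2 k : ℝ) : ℂ) * ((p.1 k : ℝ) : ℂ)) p :=
    hb.mul ((diff_cx k).differentiableAt)
  have h2 : pdq n j (fun p : Vec n => Complex.I * ((p.2.2 k : ℝ) : ℂ) * ((p.1 k : ℝ) : ℂ) * f p) p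
      = pdq n j (fun p : Vec n => Complex.I * ((p.2.2 k : ℝ) : ℂ) * ((p.1 k : ℝ) : ℂ)) p * f p
        + (Complex.I * ((p.2.2 k : ℝ) : ℂ) * ((p.1 k : ℝ) : ℂ)) * pdq n j f p :=
    pdq_mul j hbc hdf
  have h1 : pdq n j (fun p : Vec n => Complex.I * ((p.2.2 k : ℝ) : ℂ) * ((p.1 k : ℝ) : ℂ)) p
      = pdq n j (fun p : Vec n => Complex.I * ((p.2.2 k : ℝ) : ℂ)) p * ((p.1 k : ℝ) : ℂ)
        + (Complex.I * ((p.2.2 k : ℝ) : ℂ)) * pdq n j (fun p : Vec n => ((p.1 k : ℝ) : ℂ)) p :=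
    pdq_mul j hb ((diff_cx k).differentiableAt)
  have h0 : pdq n j (fun p : Vec n => Complex.I * ((p.2.2 k : ℝ) : ℂ)) p
      = pdq n j (fun _ : Vec n => Complex.I) p * ((p.2.2 k : ℝ) : ℂ)
        + Complex.I * pdq n j (fun p : Vec n => ((p.2.2 k : ℝ) : ℂ)) p :=
    pdq_mul j (differentiableAt_const _) ((diff_cq k).differentiableAt)
  rw [h2, h1, h0, pdq_const, pdq_cx, pdq_cq]
  ring

lemma pdq_Xt (hf : ContDiff ℝ (⊤:ℕ∞) f) (j : Fin n) (p : Vec n) :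
    pdq n j (Xt n f) p = ∑ k : Fin n, (((p.1 k : ℝ) : ℂ) * pdq n j (pdq n k f) p
      - Complex.I * ((p.2.1 k : ℝ) : ℂ)
        * ((if k = j then 1 else 0) * f p + ((p.2.2 k : ℝ) : ℂ) * pdq n j f p)) := by
  have hdf : ∀ q : Vec n, DifferentiableAt ℝ f q :=
    fun q => (hf.differentiable onele).differentiableAt
  have hg : ∀ (k : Fin n) (q : Vec n),
      DifferentiableAt ℝ (fun p : Vec n => ((p.1 k : ℝ) : ℂ) * pdq n k f p) q :=
    fun k q => ((diff_cx k).differentiableAt).mul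
      (((contDiff_pdq hf k).differentiable onele).differentiableAt)
  have hh : ∀ (k : Fin n) (q : Vec n), DifferentiableAt ℝ
      (fun p : Vec n => Complex.I * ((p.2.1 k : ℝ) : ℂ) * ((p.2.2 k : ℝ) : ℂ) * f p) q :=
    fun k q => (((differentiableAt_const _).mul ((diff_cy k).differentiableAt)).mul
      ((diff_cq k).differentiableAt)).mul (hdf q)
  have e : Xt n f = fun p : Vec n => ∑ k : Fin n, (((p.1 k : ℝ) : ℂ) * pdq n k f p
      - Complex.I * ((p.2.1 k : ℝ) : ℂ) * ((p.2.2 k : ℝ) : ℂ) * f p) := rfl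
  have hsum : pdq n j (Xt n f) p = ∑ k : Fin n, pdq n j (fun p : Vec n =>
      ((p.1 k : ℝ) : ℂ) * pdq n k f p
      - Complex.I * ((p.2.1 k : ℝ) : ℂ) * ((p.2.2 k : ℝ) : ℂ) * f p) p := by
    rw [e]
    exact pdq_sum j (fun k => (hg k p).sub (hh k p))
  rw [hsum]
  refine Finset.sum_congr rfl fun k _ => ?_
  have hsub : pdq n j (fun p : Vec n => ((p.1 k : ℝ) : ℂ) * pdq n k f p
      - Complex.I * ((p.2.1 k : ℝ) : ℂ) * ((p.2.2 k : ℝ) : ℂ) * f p) p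
      = pdq n j (fun p : Vec n => ((p.1 k : ℝ) : ℂ) * pdq n k f p) p
        - pdq n j (fun p : Vec n =>
            Complex.I * ((p.2.1 k : ℝ) : ℂ) * ((p.2.2 k : ℝ) : ℂ) * f p) p :=
    pdq_sub j (hg k p) (hh k p)
  rw [hsub, pdq_t1 hf j k p, pdq_t2 hf j k p]

lemma pdq_Xs (hf : ContDiff ℝ (⊤:ℕ∞) f) (j : Fin n) (p : Vec n) :
    pdq n j (Xs n f) p = ∑ k : Fin n, (((p.2.1 k : ℝ) : ℂ) * pdq n j (pdq n k f) p
      + (Complex.I * (if k = j then 1 else 0) * ((p.1 k : ℝ) : ℂ) * f p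
        + Complex.I * ((p.2.2 k : ℝ) : ℂ) * ((p.1 k : ℝ) : ℂ) * pdq n j f p)) := by
  have hdf : ∀ q : Vec n, DifferentiableAt ℝ f q :=
    fun q => (hf.differentiable onele).differentiableAt
  have hg : ∀ (k : Fin n) (q : Vec n),
      DifferentiableAt ℝ (fun p : Vec n => ((p.2.1 k : ℝ) : ℂ) * pdq n k f p) q :=
    fun k q => ((diff_cy k).differentiableAt).mul
      (((contDiff_pdq hf k).differentiable onele).differentiableAt)
  have hh : ∀ (k : Fin n) (q : Vec n), DifferentiableAt ℝ
      (fun p : Vec n => Complex.I * ((p.2.2 k : ℝ) : ℂ) * ((p.1 k : ℝ) : ℂ) * f p) q :=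
    fun k q => (((differentiableAt_const _).mul ((diff_cq k).differentiableAt)).mul
      ((diff_cx k).differentiableAt)).mul (hdf q)
  have e : Xs n f = fun p : Vec n => ∑ k : Fin n, (((p.2.1 k : ℝ) : ℂ) * pdq n k f p
      + Complex.I * ((p.2.2 k : ℝ) : ℂ) * ((p.1 k : ℝ) : ℂ) * f p) := rfl
  have hsum : pdq n j (Xs n f) p = ∑ k : Fin n, pdq n j (fun p : Vec n =>
      ((p.2.1 k : ℝ) : ℂ) * pdq n k f p
      + Complex.I * ((p.2.2 k : ℝ) : ℂ) * ((p.1 k : ℝ) : ℂ) * f p) p := by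
    rw [e]
    exact pdq_sum j (fun k => (hg k p).add (hh k p))
  rw [hsum]
  refine Finset.sum_congr rfl fun k _ => ?_
  have hadd : pdq n j (fun p : Vec n => ((p.2.1 k : ℝ) : ℂ) * pdq n k f p
      + Complex.I * ((p.2.2 k : ℝ) : ℂ) * ((p.1 k : ℝ) : ℂ) * f p) p
      = pdq n j (fun p : Vec n => ((p.2.1 k : ℝ) : ℂ) * pdq n k f p) p
        + pdq n j (fun p : Vec n =>
            Complex.I * ((p.2.2 k : ℝ) : ℂ) * ((p.1 k : ℝ) : ℂ) * f p) p :=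
    pdq_add j (hg k p) (hh k p)
  rw [hadd, pdq_t3 hf j k p, pdq_t4 hf j k p]

end CommAux

theorem commutator_Xs_Xt_eq_neg_i_r_squared
    (n : ℕ) (hn : 1 ≤ n) (f : Vec n → ℂ) (hf : ContDiff ℝ (⊤ : ℕ∞) f) :
    (fun p => Xs n (Xt n f) p - Xt n (Xs n f) p) =
      (fun p : Vec n => -Complex.I * ((∑ j : Fin n, ((p.1 j) ^ 2 + (p.2.1 j) ^ 2) : ℝ) : ℂ) * f p) := by
  funext p
  have hsym : ∀ j k : Fin n, pdq n j (pdq n k f) p = pdq n k (pdq n j f) p :=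
    fun j k => CommAux.pdq_comm hf j k p
  have e1 : Xs n (Xt n f) p = ∑ j : Fin n, (((p.2.1 j : ℝ) : ℂ) * pdq n j (Xt n f) p
      + Complex.I * ((p.2.2 j : ℝ) : ℂ) * ((p.1 j : ℝ) : ℂ) * Xt n f p) := rfl
  have e2 : Xt n (Xs n f) p = ∑ j : Fin n, (((p.1 j : ℝ) : ℂ) * pdq n j (Xs n f) p
      - Complex.I * ((p.2.1 j : ℝ) : ℂ) * ((p.2.2 j : ℝ) : ℂ) * Xs n f p) := rfl
  have e3 : Xt n f p = ∑ k : Fin n, (((p.1 k : ℝ) : ℂ) * pdq n k f p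
      - Complex.I * ((p.2.1 k : ℝ) : ℂ) * ((p.2.2 k : ℝ) : ℂ) * f p) := rfl
  have e4 : Xs n f p = ∑ k : Fin n, (((p.2.1 k : ℝ) : ℂ) * pdq n k f p
      + Complex.I * ((p.2.2 k : ℝ) : ℂ) * ((p.1 k : ℝ) : ℂ) * f p) := rfl
  have hR : (-Complex.I * ((∑ j : Fin n, ((p.1 j) ^ 2 + (p.2.1 j) ^ 2) : ℝ) : ℂ) * f p)
      = -Complex.I * (∑ j : Fin n, (((p.1 j : ℝ) : ℂ) * ((p.1 j : ℝ) : ℂ)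
          + ((p.2.1 j : ℝ) : ℂ) * ((p.2.1 j : ℝ) : ℂ))) * f p := by
    push_cast
    have hsq : (∑ j : Fin n, (((p.1 j : ℝ) : ℂ) * ((p.1 j : ℝ) : ℂ)
        + ((p.2.1 j : ℝ) : ℂ) * ((p.2.1 j : ℝ) : ℂ)))
        = ∑ j : Fin n, (((p.1 j : ℝ) : ℂ) ^ 2 + ((p.2.1 j : ℝ) : ℂ) ^ 2) :=
      Finset.sum_congr rfl fun j _ => by ring
    rw [hsq]
  rw [e1, e2, hR]
  simp only [CommAux.pdq_Xt hf, CommAux.pdq_Xs hf, e3, e4]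
  simpa using CommAux.key_sum (fun j => ((p.1 j : ℝ) : ℂ)) (fun j => ((p.2.1 j : ℝ) : ℂ))
    (fun j => ((p.2.2 j : ℝ) : ℂ)) (fun j => pdq n j f p)
    (fun j k => pdq n j (pdq n k f) p) (f p) hsym
end
end

section
/- Let n ≥ 1. For every smooth function f : ℝ^n × ℝ^n × ℝ^n → ℂ one has the mixed commutator identities D_t(X_s f) − X_s(D_t f) = 𝒪 f and D_s(X_t f) − X_t(D_s f) = −𝒪 f, where 𝒪 f = Σ_{j=1}^n ( i (x_j ∂f/∂y_j − y_j ∂f/∂x_j) + ∂²f/∂q_j² − q_j² f ). -/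
open Complex Finset Matrix

noncomputable section

/-- The operator `𝒪 f = Σ_j ( i (x_j ∂f/∂y_j − y_j ∂f/∂x_j) + ∂²f/∂q_j² − q_j² f )`. -/
noncomputable def Oop (n : ℕ) (f : Vec n → ℂ) : Vec n → ℂ :=
  fun p => ∑ j : Fin n,
    (Complex.I * ((p.1 j : ℂ) * pdy n j f p - (p.2.1 j : ℂ) * pdx n j f p)
      + pdq n j (pdq n j f) p - (p.2.2 j : ℂ) ^ 2 * f p)

namespace SympAux

variable {n : ℕ}

@[fun_prop] theorem ofReal_contDiff' {m : WithTop ℕ∞} : ContDiff ℝ m (fun x : ℝ => (x:ℂ)) :=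
  Complex.ofRealCLM.contDiff

@[fun_prop] theorem ofReal_differentiable : Differentiable ℝ (fun x : ℝ => (x:ℂ)) :=
  Complex.ofRealCLM.differentiable

/-- directional derivative -/
def d1 (v : Vec n) (g : Vec n → ℂ) : Vec n → ℂ := fun p => fderiv ℝ g p v

@[fun_prop] theorem contDiff_d1 {g : Vec n → ℂ} (hg : ContDiff ℝ (⊤:ℕ∞) g) (v : Vec n) :
    ContDiff ℝ (⊤:ℕ∞) (d1 v g) :=
  (hg.fderiv_right (m := (⊤:ℕ∞)) (by exact_mod_cast le_top)).clm_apply contDiff_const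

@[fun_prop] theorem differentiable_d1 {g : Vec n → ℂ} (hg : ContDiff ℝ (⊤:ℕ∞) g)
    (v : Vec n) : Differentiable ℝ (d1 v g) :=
  (contDiff_d1 hg v).differentiable (by simp)

@[fun_prop] theorem contDiff_sum' {m : ℕ} {F : Fin m → Vec n → ℂ}
    (h : ∀ i, ContDiff ℝ (⊤:ℕ∞) (F i)) : ContDiff ℝ (⊤:ℕ∞) (fun p => ∑ i, F i p) :=
  ContDiff.sum fun i _ => h i

@[fun_prop] theorem differentiable_sum' {m : ℕ} {F : Fin m → Vec n → ℂ}
    (h : ∀ i, Differentiable ℝ (F i)) : Differentiable ℝ (fun p => ∑ i, F i p) :=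
  Differentiable.fun_sum fun i _ => h i

def eX (j : Fin n) : Vec n := (Pi.single j 1, 0, 0)
def eY (j : Fin n) : Vec n := (0, Pi.single j 1, 0)
def eQ (j : Fin n) : Vec n := (0, 0, Pi.single j 1)

lemma curve_x (p : Vec n) (j : Fin n) (t : ℝ) :
    ((Function.update p.1 j t, p.2.1, p.2.2) : Vec n) = p + (t - p.1 j) • eX j := by
  refine Prod.ext ?_ (Prod.ext ?_ ?_) <;> funext i <;>
    simp only [eX, Prod.fst_add, Prod.snd_add, Prod.smul_mk, Pi.add_apply, Pi.smul_apply,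
      smul_eq_mul, Prod.smul_fst, Prod.smul_snd, smul_zero, Pi.zero_apply, add_zero,
      Pi.single_apply, Function.update]
  · by_cases h : i = j <;> simp [h]

lemma curve_y (p : Vec n) (j : Fin n) (t : ℝ) :
    ((p.1, Function.update p.2.1 j t, p.2.2) : Vec n) = p + (t - p.2.1 j) • eY j := by
  refine Prod.ext ?_ (Prod.ext ?_ ?_) <;> funext i <;>
    simp only [eY, Prod.fst_add, Prod.snd_add, Prod.smul_mk, Pi.add_apply, Pi.smul_apply,
      smul_eq_mul, Prod.smul_fst, Prod.smul_snd, smul_zero, Pi.zero_apply, add_zero,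
      Pi.single_apply, Function.update]
  · by_cases h : i = j <;> simp [h]

lemma curve_q (p : Vec n) (j : Fin n) (t : ℝ) :
    ((p.1, p.2.1, Function.update p.2.2 j t) : Vec n) = p + (t - p.2.2 j) • eQ j := by
  refine Prod.ext ?_ (Prod.ext ?_ ?_) <;> funext i <;>
    simp only [eQ, Prod.fst_add, Prod.snd_add, Prod.smul_mk, Pi.add_apply, Pi.smul_apply,
      smul_eq_mul, Prod.smul_fst, Prod.smul_snd, smul_zero, Pi.zero_apply, add_zero,
      Pi.single_apply, Function.update]
  · by_cases h : i = j <;> simp [h]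

lemma hasDerivAt_curve (p : Vec n) (v : Vec n) (a t : ℝ) :
    HasDerivAt (fun t : ℝ => p + (t - a) • v) v t := by
  simpa using (((hasDerivAt_id t).sub_const a).smul_const v).const_add p


lemma pdx_eq (j : Fin n) {g : Vec n → ℂ} (hg : Differentiable ℝ g) :
    pdx n j g = d1 (eX j) g := by
  funext p
  have h2 : HasFDerivAt g (fderiv ℝ g p) (p + ((p.1 j) - p.1 j) • eX j) := by
    simpa using (hg p).hasFDerivAt
  have hc := h2.comp_hasDerivAt (p.1 j) (hasDerivAt_curve p (eX j) (p.1 j) (p.1 j))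
  have h3 : (fun t => g (Function.update p.1 j t, p.2.1, p.2.2)) =
      fun t : ℝ => g (p + (t - p.1 j) • eX j) := by
    funext t; rw [curve_x]
  rw [pdx, d1, h3]
  exact hc.deriv

lemma pdy_eq (j : Fin n) {g : Vec n → ℂ} (hg : Differentiable ℝ g) :
    pdy n j g = d1 (eY j) g := by
  funext p
  have h2 : HasFDerivAt g (fderiv ℝ g p) (p + ((p.2.1 j) - p.2.1 j) • eY j) := by
    simpa using (hg p).hasFDerivAt
  have hc := h2.comp_hasDerivAt (p.2.1 j) (hasDerivAt_curve p (eY j) (p.2.1 j) (p.2.1 j))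
  have h3 : (fun t => g (p.1, Function.update p.2.1 j t, p.2.2)) =
      fun t : ℝ => g (p + (t - p.2.1 j) • eY j) := by
    funext t; rw [curve_y]
  rw [pdy, d1, h3]
  exact hc.deriv

lemma pdq_eq (j : Fin n) {g : Vec n → ℂ} (hg : Differentiable ℝ g) :
    pdq n j g = d1 (eQ j) g := by
  funext p
  have h2 : HasFDerivAt g (fderiv ℝ g p) (p + ((p.2.2 j) - p.2.2 j) • eQ j) := by
    simpa using (hg p).hasFDerivAt
  have hc := h2.comp_hasDerivAt (p.2.2 j) (hasDerivAt_curve p (eQ j) (p.2.2 j) (p.2.2 j))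
  have h3 : (fun t => g (p.1, p.2.1, Function.update p.2.2 j t)) =
      fun t : ℝ => g (p + (t - p.2.2 j) • eQ j) := by
    funext t; rw [curve_q]
  rw [pdq, d1, h3]
  exact hc.deriv

lemma Sm_fderiv_dAt {g : Vec n → ℂ} (hg : ContDiff ℝ (⊤:ℕ∞) g) (p : Vec n) :
    DifferentiableAt ℝ (fderiv ℝ g) p := by
  have : ContDiff ℝ (⊤:ℕ∞) (fderiv ℝ g) :=
    hg.fderiv_right (m := (⊤:ℕ∞)) (by exact_mod_cast le_top)
  exact (this.differentiable (by simp)) p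

lemma d1_swap {g : Vec n → ℂ} (hg : ContDiff ℝ (⊤:ℕ∞) g) (u v : Vec n) :
    d1 v (d1 u g) = d1 u (d1 v g) := by
  have key : ∀ u v : Vec n, ∀ p, d1 v (d1 u g) p = fderiv ℝ (fderiv ℝ g) p v u := by
    intro u v p
    have h1 : d1 v (d1 u g) p = fderiv ℝ (fun q => (fderiv ℝ g q) u) p v := rfl
    rw [h1, fderiv_clm_apply (Sm_fderiv_dAt hg p) (differentiableAt_const u)]
    simp
  funext p
  rw [key, key]
  exact (hg.contDiffAt.isSymmSndFDerivAt (n := ((⊤:ℕ∞) : WithTop ℕ∞)) (by rw [minSmoothness_of_isRCLikeNormedField]; exact WithTop.coe_le_coe.mpr le_top)) v u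

end SympAux

namespace SympAux
variable {n : ℕ}

lemma sm_dAt {g : Vec n → ℂ} (hg : ContDiff ℝ (⊤:ℕ∞) g) (p : Vec n) : DifferentiableAt ℝ g p :=
  (hg.differentiable (by simp)) p

theorem d1_add {g h : Vec n → ℂ} (hg : ContDiff ℝ (⊤:ℕ∞) g) (hh : ContDiff ℝ (⊤:ℕ∞) h) (v : Vec n) :
    d1 v (fun p => g p + h p) = fun p => d1 v g p + d1 v h p := by
  funext p; simp [d1, fderiv_fun_add (sm_dAt hg p) (sm_dAt hh p)]

theorem d1_sub {g h : Vec n → ℂ} (hg : ContDiff ℝ (⊤:ℕ∞) g) (hh : ContDiff ℝ (⊤:ℕ∞) h) (v : Vec n) :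
    d1 v (fun p => g p - h p) = fun p => d1 v g p - d1 v h p := by
  funext p; simp [d1, fderiv_fun_sub (sm_dAt hg p) (sm_dAt hh p)]

theorem d1_sum {m : ℕ} {F : Fin m → Vec n → ℂ} (hF : ∀ k, ContDiff ℝ (⊤:ℕ∞) (F k)) (v : Vec n) :
    d1 v (fun p => ∑ k, F k p) = fun p => ∑ k, d1 v (F k) p := by
  funext p
  simp only [d1]
  rw [fderiv_fun_sum (fun k _ => sm_dAt (hF k) p)]
  simp

theorem d1_mul {g h : Vec n → ℂ} (hg : ContDiff ℝ (⊤:ℕ∞) g) (hh : ContDiff ℝ (⊤:ℕ∞) h) (v : Vec n) :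
    d1 v (fun p => g p * h p) = fun p => d1 v g p * h p + g p * d1 v h p := by
  funext p
  simp only [d1]
  rw [fderiv_fun_mul (sm_dAt hg p) (sm_dAt hh p)]
  simp only [ContinuousLinearMap.add_apply, ContinuousLinearMap.smul_apply, smul_eq_mul]; ring

theorem d1_const (c : ℂ) (v : Vec n) : d1 v (fun _ : Vec n => c) = fun _ => 0 := by
  funext p; simp [d1]

theorem d1_cX (k : Fin n) (v : Vec n) :
    d1 v (fun p : Vec n => ((p.1 k : ℝ) : ℂ)) = fun _ => ((v.1 k : ℝ) : ℂ) := by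
  funext p
  have : (fun p : Vec n => ((p.1 k : ℝ) : ℂ)) = ⇑(Complex.ofRealCLM.comp
      ((ContinuousLinearMap.proj k).comp
        (ContinuousLinearMap.fst ℝ (Fin n → ℝ) ((Fin n → ℝ) × (Fin n → ℝ))))) := rfl
  rw [d1, this, ContinuousLinearMap.fderiv]; rfl

theorem d1_cY (k : Fin n) (v : Vec n) :
    d1 v (fun p : Vec n => ((p.2.1 k : ℝ) : ℂ)) = fun _ => ((v.2.1 k : ℝ) : ℂ) := by
  funext p
  have : (fun p : Vec n => ((p.2.1 k : ℝ) : ℂ)) = ⇑(Complex.ofRealCLM.comp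
      ((ContinuousLinearMap.proj k).comp
        ((ContinuousLinearMap.fst ℝ (Fin n → ℝ) (Fin n → ℝ)).comp
          (ContinuousLinearMap.snd ℝ (Fin n → ℝ) ((Fin n → ℝ) × (Fin n → ℝ)))))) := rfl
  rw [d1, this, ContinuousLinearMap.fderiv]; rfl

theorem d1_cQ (k : Fin n) (v : Vec n) :
    d1 v (fun p : Vec n => ((p.2.2 k : ℝ) : ℂ)) = fun _ => ((v.2.2 k : ℝ) : ℂ) := by
  funext p
  have : (fun p : Vec n => ((p.2.2 k : ℝ) : ℂ)) = ⇑(Complex.ofRealCLM.comp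
      ((ContinuousLinearMap.proj k).comp
        ((ContinuousLinearMap.snd ℝ (Fin n → ℝ) (Fin n → ℝ)).comp
          (ContinuousLinearMap.snd ℝ (Fin n → ℝ) ((Fin n → ℝ) × (Fin n → ℝ)))))) := rfl
  rw [d1, this, ContinuousLinearMap.fderiv]; rfl

end SympAux

namespace SympAux
variable {n : ℕ}

lemma eX_c1 (j k : Fin n) : (((eX j).1 k : ℝ) : ℂ) = if k = j then 1 else 0 := by
  simp [eX, Pi.single_apply, apply_ite]
lemma eX_c2 (j k : Fin n) : (((eX j).2.1 k : ℝ) : ℂ) = 0 := by simp [eX]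
lemma eX_c3 (j k : Fin n) : (((eX j).2.2 k : ℝ) : ℂ) = 0 := by simp [eX]
lemma eY_c1 (j k : Fin n) : (((eY j).1 k : ℝ) : ℂ) = 0 := by simp [eY]
lemma eY_c2 (j k : Fin n) : (((eY j).2.1 k : ℝ) : ℂ) = if k = j then 1 else 0 := by
  simp [eY, Pi.single_apply, apply_ite]
lemma eY_c3 (j k : Fin n) : (((eY j).2.2 k : ℝ) : ℂ) = 0 := by simp [eY]
lemma eQ_c1 (j k : Fin n) : (((eQ j).1 k : ℝ) : ℂ) = 0 := by simp [eQ]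
lemma eQ_c2 (j k : Fin n) : (((eQ j).2.1 k : ℝ) : ℂ) = 0 := by simp [eQ]
lemma eQ_c3 (j k : Fin n) : (((eQ j).2.2 k : ℝ) : ℂ) = if k = j then 1 else 0 := by
  simp [eQ, Pi.single_apply, apply_ite]

lemma collapse (M : Fin n → Fin n → ℂ) (c : Fin n → ℂ)
    (h : ∀ j k, M j k + M k j = (if k = j then c j + c k else 0)) :
    ∑ j, ∑ k, M j k = ∑ j, c j := by
  have h2 : (∑ j, ∑ k, M j k) + (∑ j, ∑ k, M j k) = (∑ j, c j) + (∑ j, c j) := by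
    nth_rewrite 2 [Finset.sum_comm]
    simp only [← Finset.sum_add_distrib]
    refine Finset.sum_congr rfl fun j _ => ?_
    calc ∑ k, (M j k + M k j) = ∑ k, (if k = j then c j + c k else 0) := by
          refine Finset.sum_congr rfl fun k _ => h j k
      _ = c j + c j := by
          rw [Finset.sum_ite_eq' univ j (fun k => c j + c k)]
          simp
  have h3 : (2:ℂ) * (∑ j, ∑ k, M j k) = 2 * ∑ j, c j := by
    rw [two_mul, two_mul]; exact h2
  exact mul_left_cancel₀ two_ne_zero h3

end SympAux

namespace SympAux
variable {n : ℕ}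

lemma identity1 (f : Vec n → ℂ) (hf : ContDiff ℝ (⊤:ℕ∞) f) (hd : Differentiable ℝ f) (p : Vec n) :
    Dt n (Xs n f) p - Xs n (Dt n f) p = Oop n f p := by
  have hXs : Xs n f = fun p => ∑ k : Fin n,
      ((p.2.1 k : ℂ) * d1 (eQ k) f p + Complex.I * (p.2.2 k : ℂ) * (p.1 k : ℂ) * f p) := by
    funext p; simp only [Xs, pdq_eq _ hd]
  have hDt : Dt n f = fun p => ∑ k : Fin n,
      (Complex.I * (p.2.2 k : ℂ) * d1 (eX k) f p + d1 (eY k) (d1 (eQ k) f) p) := by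
    funext p
    simp (disch := intros; fun_prop) only [Dt, pdx_eq, pdy_eq, pdq_eq]
  simp (disch := intros; fun_prop) only [Dt, Xs, Oop, hXs, hDt, pdx_eq, pdy_eq, pdq_eq,
    d1_sum, d1_add, d1_sub, d1_mul, d1_const, d1_cX, d1_cY, d1_cQ]
  simp only [eX_c1, eX_c2, eX_c3, eY_c1, eY_c2, eY_c3, eQ_c1, eQ_c2, eQ_c3,
    mul_zero, zero_mul, add_zero, zero_add, mul_one, one_mul]
  simp only [Finset.mul_sum, ← Finset.sum_add_distrib, ← Finset.sum_sub_distrib]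
  refine collapse _ _ fun j k => ?_
  have S2 : ∀ u v : Vec n, d1 v (d1 u f) = d1 u (d1 v f) := fun u v => d1_swap hf u v
  have S3 : ∀ w u v : Vec n, d1 v (d1 u (d1 w f)) = d1 u (d1 v (d1 w f)) :=
    fun w u v => d1_swap (contDiff_d1 hf w) u v
  by_cases h : k = j
  · subst h
    simp only [eq_self_iff_true, if_true]
    rw [S2 (eQ k) (eX k), S3 (eQ k) (eY k) (eQ k)]
    linear_combination (2 * ((p.2.2 k : ℝ) : ℂ)^2 * f p) * Complex.I_sq
  · have h' : ¬ (j = k) := fun e => h e.symm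
    simp only [if_neg h, if_neg h']
    rw [S2 (eQ k) (eX j), S2 (eQ j) (eX k), S3 (eQ k) (eY k) (eQ j), S3 (eQ j) (eY j) (eQ k),
      S2 (eQ j) (eQ k)]
    ring

lemma identity2 (f : Vec n → ℂ) (hf : ContDiff ℝ (⊤:ℕ∞) f) (hd : Differentiable ℝ f) (p : Vec n) :
    Ds n (Xt n f) p - Xt n (Ds n f) p = -(Oop n f p) := by
  have hXt : Xt n f = fun p => ∑ k : Fin n,
      ((p.1 k : ℂ) * d1 (eQ k) f p - Complex.I * (p.2.1 k : ℂ) * (p.2.2 k : ℂ) * f p) := by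
    funext p; simp only [Xt, pdq_eq _ hd]
  have hDs : Ds n f = fun p => ∑ k : Fin n,
      (Complex.I * (p.2.2 k : ℂ) * d1 (eY k) f p - d1 (eQ k) (d1 (eX k) f) p) := by
    funext p
    simp (disch := intros; fun_prop) only [Ds, pdx_eq, pdy_eq, pdq_eq]
  simp (disch := intros; fun_prop) only [Ds, Xt, Oop, hXt, hDs, pdx_eq, pdy_eq, pdq_eq,
    d1_sum, d1_add, d1_sub, d1_mul, d1_const, d1_cX, d1_cY, d1_cQ]
  simp only [eX_c1, eX_c2, eX_c3, eY_c1, eY_c2, eY_c3, eQ_c1, eQ_c2, eQ_c3,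
    mul_zero, zero_mul, add_zero, zero_add, mul_one, one_mul]
  simp only [Finset.mul_sum, neg_add, neg_sub, ← Finset.sum_neg_distrib,
    ← Finset.sum_add_distrib, ← Finset.sum_sub_distrib]
  refine collapse _ _ fun j k => ?_
  have S2 : ∀ u v : Vec n, d1 v (d1 u f) = d1 u (d1 v f) := fun u v => d1_swap hf u v
  have S3 : ∀ w u v : Vec n, d1 v (d1 u (d1 w f)) = d1 u (d1 v (d1 w f)) :=
    fun w u v => d1_swap (contDiff_d1 hf w) u v
  by_cases h : k = j
  · subst h
    simp only [eq_self_iff_true, if_true]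
    rw [S2 (eY k) (eQ k), S2 (eQ k) (eX k)]
    linear_combination (-2 * ((p.2.2 k : ℝ) : ℂ)^2 * f p) * Complex.I_sq
  · have h' : ¬ (j = k) := fun e => h e.symm
    simp only [if_neg h, if_neg h']
    rw [S2 (eY j) (eQ k), S2 (eY k) (eQ j), S2 (eQ k) (eX j), S2 (eQ j) (eX k),
      S3 (eX j) (eQ j) (eQ k), S3 (eX k) (eQ j) (eQ k)]
    ring

end SympAux

theorem mixed_commutators_give_Oop
    (n : ℕ) (hn : 1 ≤ n) (f : Vec n → ℂ) (hf : ContDiff ℝ (⊤ : ℕ∞) f) :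
    ((fun p => Dt n (Xs n f) p - Xs n (Dt n f) p) = Oop n f) ∧
    ((fun p => Ds n (Xt n f) p - Xt n (Ds n f) p) = (fun p => -(Oop n f p))) := by
  have hd : Differentiable ℝ f := hf.differentiable (by simp)
  constructor
  · funext p; exact SympAux.identity1 f hf hd p
  · funext p; exact SympAux.identity2 f hf hd p
end
end

section
/- Let n ≥ 1 and let f : ℂ^n → ℂ be holomorphic (complex differentiable on all of ℂ^n). Define F : ℝ^n × ℝ^n × ℝ^n → ℂ by F(x,y,q) = f(x_1 + i y_1, …, x_n + i y_n) · exp(−(1/2) Σ_{j=1}^n q_j²). Then F satisfies both D_s F = 0 and D_t F = 0 identically, i.e. F is symplectic h-monogenic. -/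
open Complex Finset Matrix

noncomputable section

variable {n : ℕ}

theorem innerLine_hasDerivAt (w : Fin n → ℂ) (j : Fin n) (a c : ℂ) (t₀ : ℝ) :
    HasDerivAt (fun t : ℝ => Function.update w j (a * (t : ℂ) + c)) (Pi.single j a) t₀ := by
  rw [hasDerivAt_pi]
  intro k
  by_cases hk : k = j
  · subst hk
    simp only [Function.update_self, Pi.single_eq_same]
    have h1 : HasDerivAt (fun t : ℝ => (t : ℂ)) 1 t₀ :=
      (hasDerivAt_id (t₀ : ℂ)).comp_ofReal
    simpa using (h1.const_mul a).add_const c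
  · simp only [Function.update_of_ne hk, Pi.single_eq_of_ne hk]
    exact hasDerivAt_const _ _

theorem fcomp_hasDerivAt (f : (Fin n → ℂ) → ℂ) (hf : Differentiable ℂ f)
    (w : Fin n → ℂ) (j : Fin n) (a c : ℂ) (t₀ : ℝ) :
    HasDerivAt (fun t : ℝ => f (Function.update w j (a * (t : ℂ) + c)))
      (a * fderiv ℂ f (Function.update w j (a * (t₀ : ℂ) + c)) (Pi.single j 1)) t₀ := by
  have h := ((hf _).hasFDerivAt.restrictScalars ℝ).comp_hasDerivAt t₀
    (innerLine_hasDerivAt w j a c t₀)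
  have hs : (Pi.single j a : Fin n → ℂ) = a • (Pi.single j 1 : Fin n → ℂ) := by
    simp [← Pi.single_smul]
  convert h using 1
  · rfl
  · rfl
  simp [hs, _root_.map_smul, smul_eq_mul]

theorem gauss_hasDerivAt (q : Fin n → ℝ) (j : Fin n) (t₀ : ℝ) :
    HasDerivAt (fun t : ℝ =>
        Complex.exp (-(1/2 : ℂ) * ((∑ k, (Function.update q j t k) ^ 2 : ℝ) : ℂ)))
      (-(t₀ : ℂ) * Complex.exp (-(1/2 : ℂ) * ((∑ k, (Function.update q j t₀ k) ^ 2 : ℝ) : ℂ)))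
      t₀ := by
  have hs : HasDerivAt (fun t : ℝ => (∑ k, (Function.update q j t k) ^ 2 : ℝ))
      (∑ k : Fin n, (if k = j then 2 * t₀ else 0)) t₀ := by
    apply HasDerivAt.fun_sum
    intro k _
    by_cases hk : k = j
    · subst hk
      simp only [Function.update_self, if_pos rfl]
      simpa using (hasDerivAt_pow 2 t₀)
    · simp only [Function.update_of_ne hk, if_neg hk]
      exact hasDerivAt_const _ _
  rw [Finset.sum_ite_eq' Finset.univ j (fun _ => 2 * t₀), if_pos (Finset.mem_univ j)] at hs
  have hc := (hs.ofReal_comp).const_mul (-(1/2 : ℂ))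
  have := hc.cexp
  convert this using 1
  push_cast
  ring

-- abbreviations used only in statements below
noncomputable def Zm (p : Vec n) : Fin n → ℂ := fun k => (p.1 k : ℂ) + Complex.I * (p.2.1 k : ℂ)
noncomputable def Gm (p : Vec n) : ℂ := Complex.exp (-(1/2 : ℂ) * ((∑ k, (p.2.2 k) ^ 2 : ℝ) : ℂ))
noncomputable def FF (f : (Fin n → ℂ) → ℂ) : Vec n → ℂ := fun p =>
  f (fun k => (p.1 k : ℂ) + Complex.I * (p.2.1 k : ℂ)) *
    Complex.exp (-(1/2 : ℂ) * ((∑ k, (p.2.2 k) ^ 2 : ℝ) : ℂ))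

theorem pdx_FF (f : (Fin n → ℂ) → ℂ) (hf : Differentiable ℂ f) (j : Fin n) (p : Vec n) :
    pdx n j (FF f) p = fderiv ℂ f (Zm p) (Pi.single j 1) * Gm p := by
  have harg : ∀ t : ℝ, (fun k => ((Function.update p.1 j t k : ℝ) : ℂ) + Complex.I * (p.2.1 k : ℂ))
      = Function.update (Zm p) j (1 * (t : ℂ) + Complex.I * (p.2.1 j : ℂ)) := by
    intro t; funext k
    by_cases hk : k = j
    · subst hk; simp [Zm]
    · simp [Function.update_of_ne hk, Zm]
  have h := (fcomp_hasDerivAt f hf (Zm p) j 1 (Complex.I * (p.2.1 j : ℂ)) (p.1 j)).mul_const (Gm p)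
  have hpt : Function.update (Zm p) j (1 * ((p.1 j : ℝ) : ℂ) + Complex.I * (p.2.1 j : ℂ)) = Zm p := by
    rw [show (1 : ℂ) * ((p.1 j : ℝ) : ℂ) + Complex.I * (p.2.1 j : ℂ) = Zm p j from by simp [Zm]]
    exact Function.update_eq_self _ _
  rw [hpt] at h
  have := h.deriv
  simp only [pdx, FF]
  simp_rw [harg]
  simp only [Gm] at this ⊢
  rw [this]
  ring

theorem pdy_FF (f : (Fin n → ℂ) → ℂ) (hf : Differentiable ℂ f) (j : Fin n) (p : Vec n) :
    pdy n j (FF f) p = Complex.I * fderiv ℂ f (Zm p) (Pi.single j 1) * Gm p := by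
  have harg : ∀ t : ℝ, (fun k => ((p.1 k : ℝ) : ℂ) + Complex.I * ((Function.update p.2.1 j t k : ℝ) : ℂ))
      = Function.update (Zm p) j (Complex.I * (t : ℂ) + (p.1 j : ℂ)) := by
    intro t; funext k
    by_cases hk : k = j
    · subst hk; simp [Zm]; ring
    · simp [Function.update_of_ne hk, Zm]
  have h := (fcomp_hasDerivAt f hf (Zm p) j Complex.I ((p.1 j : ℂ)) (p.2.1 j)).mul_const (Gm p)
  have hpt : Function.update (Zm p) j (Complex.I * ((p.2.1 j : ℝ) : ℂ) + (p.1 j : ℂ)) = Zm p := by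
    rw [show Complex.I * ((p.2.1 j : ℝ) : ℂ) + (p.1 j : ℂ) = Zm p j from by simp [Zm]; ring]
    exact Function.update_eq_self _ _
  rw [hpt] at h
  have := h.deriv
  simp only [pdy, FF]
  simp_rw [harg]
  simp only [Gm] at this ⊢
  rw [this]

theorem pdq_FF (f : (Fin n → ℂ) → ℂ) (j : Fin n) (p : Vec n) :
    pdq n j (FF f) p = f (Zm p) * (-(p.2.2 j : ℂ) * Gm p) := by
  have h := (gauss_hasDerivAt p.2.2 j (p.2.2 j)).const_mul (f (Zm p))
  rw [Function.update_eq_self] at h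
  have := h.deriv
  simp only [pdq, FF]
  rw [show (fun t : ℝ => f (fun k => ((p.1 k : ℝ) : ℂ) + Complex.I * (p.2.1 k : ℂ)) *
      Complex.exp (-(1/2 : ℂ) * ((∑ k, (Function.update p.2.2 j t k) ^ 2 : ℝ) : ℂ)))
    = (fun t : ℝ => f (Zm p) *
      Complex.exp (-(1/2 : ℂ) * ((∑ k, (Function.update p.2.2 j t k) ^ 2 : ℝ) : ℂ))) from rfl]
  rw [this]
  simp [Gm]

theorem pdq_pdx_FF (f : (Fin n → ℂ) → ℂ) (hf : Differentiable ℂ f) (j : Fin n) (p : Vec n) :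
    pdq n j (pdx n j (FF f)) p
      = fderiv ℂ f (Zm p) (Pi.single j 1) * (-(p.2.2 j : ℂ) * Gm p) := by
  rw [funext (pdx_FF f hf j)]
  simp only [pdq]
  have h := (gauss_hasDerivAt p.2.2 j (p.2.2 j)).const_mul (fderiv ℂ f (Zm p) (Pi.single j 1))
  rw [Function.update_eq_self] at h
  have hgoal := h.deriv
  have hz : ∀ t : ℝ, Zm ((p.1, p.2.1, Function.update p.2.2 j t) : Vec n) = Zm p := fun _ => rfl
  simp only [Gm] at hgoal ⊢
  simp_rw [hz]
  rw [hgoal]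

theorem pdy_pdq_FF (f : (Fin n → ℂ) → ℂ) (hf : Differentiable ℂ f) (j : Fin n) (p : Vec n) :
    pdy n j (pdq n j (FF f)) p
      = Complex.I * fderiv ℂ f (Zm p) (Pi.single j 1) * (-(p.2.2 j : ℂ) * Gm p) := by
  rw [funext (pdq_FF f j)]
  simp only [pdy]
  have harg : ∀ t : ℝ, Zm ((p.1, Function.update p.2.1 j t, p.2.2) : Vec n)
      = Function.update (Zm p) j (Complex.I * (t : ℂ) + (p.1 j : ℂ)) := by
    intro t; funext k
    by_cases hk : k = j
    · subst hk; simp [Zm]; ring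
    · simp [Function.update_of_ne hk, Zm]
  have h := (fcomp_hasDerivAt f hf (Zm p) j Complex.I ((p.1 j : ℂ)) (p.2.1 j)).mul_const
    (-(p.2.2 j : ℂ) * Gm p)
  have hpt : Function.update (Zm p) j (Complex.I * ((p.2.1 j : ℝ) : ℂ) + (p.1 j : ℂ)) = Zm p := by
    rw [show Complex.I * ((p.2.1 j : ℝ) : ℂ) + (p.1 j : ℂ) = Zm p j from by simp [Zm]; ring]
    exact Function.update_eq_self _ _
  rw [hpt] at h
  have hgoal := h.deriv
  have hG : ∀ t : ℝ, Gm ((p.1, Function.update p.2.1 j t, p.2.2) : Vec n) = Gm p := fun _ => rfl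
  have hq : ∀ t : ℝ, ((p.1, Function.update p.2.1 j t, p.2.2) : Vec n).2.2 j = p.2.2 j :=
    fun _ => rfl
  simp_rw [harg, hG]
  rw [hgoal]


theorem holomorphic_times_Gaussian_is_symplectic_h_monogenic
    (n : ℕ) (hn : 1 ≤ n) (f : (Fin n → ℂ) → ℂ) (hf : Differentiable ℂ f) :
    Ds n (fun p : Vec n =>
        f (fun j => (p.1 j : ℂ) + Complex.I * (p.2.1 j : ℂ)) *
          Complex.exp (-(1 / 2 : ℂ) * ((∑ j : Fin n, (p.2.2 j) ^ 2 : ℝ) : ℂ))) = (fun _ => 0) ∧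
    Dt n (fun p : Vec n =>
        f (fun j => (p.1 j : ℂ) + Complex.I * (p.2.1 j : ℂ)) *
          Complex.exp (-(1 / 2 : ℂ) * ((∑ j : Fin n, (p.2.2 j) ^ 2 : ℝ) : ℂ))) = (fun _ => 0) := by
  constructor
  · funext p
    show Ds n (FF f) p = 0
    rw [Ds]
    apply Finset.sum_eq_zero
    intro j _
    rw [pdy_FF f hf j p, pdq_pdx_FF f hf j p]
    linear_combination ((p.2.2 j : ℂ) * fderiv ℂ f (Zm p) (Pi.single j 1) * Gm p) * Complex.I_sq
  · funext p
    show Dt n (FF f) p = 0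
    rw [Dt]
    apply Finset.sum_eq_zero
    intro j _
    rw [pdx_FF f hf j p, pdy_pdq_FF f hf j p]
    ring
end
end
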